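/- For every integer r ≥ 3 there exists N such that for all n ≥ N the following holds: for every nonempty X ⊆ [2,n] such that the star 𝒮 is optimal for X among MLCIFs, writing m = max X, the left-compressed intersecting families in ([n] choose r) which are LCIF-optimal for X are precisely the LCIFs 𝒜 with AHM_m ⊆ 𝒜 ⊆ 𝒮. -/

import Mathlib

open Finset

/-- The family of all `r`-element subsets of `[n] = {1, …, n}`. -/
def chooseFam (n r : ℕ) : Finset (Finset ℕ) := (Finset.Icc 1 n).powersetCard r

/-- A family of sets is intersecting if any two members meet. -/
def IntersectingFam (𝒜 : Finset (Finset ℕ)) : Prop :=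
  ∀ A ∈ 𝒜, ∀ B ∈ 𝒜, (A ∩ B).Nonempty

/-- `DomLE B A` : writing the elements in increasing order, the `i`-th element
of `B` is at most the `i`-th element of `A` (and they have the same size). -/
def DomLE (B A : Finset ℕ) : Prop :=
  B.card = A.card ∧
  ∀ (i : ℕ) (hB : i < (B.sort (· ≤ ·)).length) (hA : i < (A.sort (· ≤ ·)).length),
    (B.sort (· ≤ ·)).get ⟨i, hB⟩ ≤ (A.sort (· ≤ ·)).get ⟨i, hA⟩

/-- A family of `r`-subsets of `[n]` is left-compressed if it is downward closed
under the domination order. -/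
def LeftCompressed (n r : ℕ) (𝒜 : Finset (Finset ℕ)) : Prop :=
  ∀ A ∈ 𝒜, ∀ B ∈ chooseFam n r, DomLE B A → B ∈ 𝒜

/-- A left-compressed intersecting family in `([n] choose r)`. -/
def IsLCIF (n r : ℕ) (𝒜 : Finset (Finset ℕ)) : Prop :=
  𝒜 ⊆ chooseFam n r ∧ IntersectingFam 𝒜 ∧ LeftCompressed n r 𝒜

/-- A maximal left-compressed intersecting family. -/
def IsMLCIF (n r : ℕ) (𝒜 : Finset (Finset ℕ)) : Prop :=
  IsLCIF n r 𝒜 ∧ ∀ ℬ : Finset (Finset ℕ), IsLCIF n r ℬ → 𝒜 ⊆ ℬ → ℬ = 𝒜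

/-- The number of members of `𝒜` hitting `X`. -/
def hit (X : Finset ℕ) (𝒜 : Finset (Finset ℕ)) : ℕ :=
  (𝒜.filter fun A => (A ∩ X).Nonempty).card

/-- An MLCIF optimal for `X`: it maximises `hit X` among all MLCIFs. -/
def OptimalMLCIF (n r : ℕ) (X : Finset ℕ) (𝒜 : Finset (Finset ℕ)) : Prop :=
  IsMLCIF n r 𝒜 ∧ ∀ ℬ : Finset (Finset ℕ), IsMLCIF n r ℬ → hit X ℬ ≤ hit X 𝒜

/-- An LCIF optimal for `X` among all LCIFs. -/
def OptimalLCIF (n r : ℕ) (X : Finset ℕ) (𝒜 : Finset (Finset ℕ)) : Prop :=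
  IsLCIF n r 𝒜 ∧ ∀ ℬ : Finset (Finset ℕ), IsLCIF n r ℬ → hit X ℬ ≤ hit X 𝒜

/-- The `t`-adjusted Hilton–Milner family. -/
def AHM (n r t : ℕ) : Finset (Finset ℕ) :=
  (chooseFam n r).filter fun A =>
    (1 ∈ A ∧ (A ∩ Finset.Icc 2 t).Nonempty) ∨ Finset.Icc 2 t ⊆ A

/-- The star: all `r`-subsets of `[n]` containing `1`. -/
def starFam (n r : ℕ) : Finset (Finset ℕ) :=
  (chooseFam n r).filter fun A => 1 ∈ A

/-- `G ⊆ [n]` is a potential generator of `𝒜`: every `A ∈ ([n] choose r)`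
containing `G` lies in `𝒜`. -/
def PotGen (n r : ℕ) (𝒜 : Finset (Finset ℕ)) (G : Finset ℕ) : Prop :=
  G ⊆ Finset.Icc 1 n ∧ ∀ A ∈ chooseFam n r, G ⊆ A → A ∈ 𝒜

open Classical in
/-- The canonical generating family: all inclusion-minimal potential generators. -/
noncomputable def canonGen (n r : ℕ) (𝒜 : Finset (Finset ℕ)) : Finset (Finset ℕ) :=
  (Finset.Icc 1 n).powerset.filter fun G =>
    PotGen n r 𝒜 G ∧ ∀ G' ⊆ G, PotGen n r 𝒜 G' → G' = G

/-- The rank of `𝒜`: the smallest size of a generator. -/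
noncomputable def rankFam (n r : ℕ) (𝒜 : Finset (Finset ℕ)) : ℕ :=
  sInf {k : ℕ | ∃ G ∈ canonGen n r 𝒜, G.card = k}

/-- The family generated by `𝒢` with respect to `n` and `r`. -/
def genFam (n r : ℕ) (𝒢 : Finset (Finset ℕ)) : Finset (Finset ℕ) :=
  (chooseFam n r).filter fun A => ∃ G ∈ 𝒢, G ⊆ A

/-- `𝒜 ∈ I_j`: an MLCIF of rank two whose generators of size two are precisely
`{1,2}, {1,3}, …, {1,j}`. -/
noncomputable def MemI (n r j : ℕ) (𝒜 : Finset (Finset ℕ)) : Prop :=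
  IsMLCIF n r 𝒜 ∧ rankFam n r 𝒜 = 2 ∧
    (canonGen n r 𝒜).filter (fun G => G.card = 2) =
      (Finset.Icc 2 j).image fun i => ({1, i} : Finset ℕ)


namespace BBtool

/-- `kth A i` : the `i`-th smallest element of `A` (0-indexed), junk `0` out of range. -/
noncomputable def kth (A : Finset ℕ) (i : ℕ) : ℕ := (A.sort (· ≤ ·)).getD i 0

/-- `cnt A v` : number of elements of `A` which are `≤ v`. -/
def cnt (A : Finset ℕ) (v : ℕ) : ℕ := (A.filter (fun a => a ≤ v)).card

lemma length_sort' (A : Finset ℕ) : (A.sort (· ≤ ·)).length = A.card :=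
  Finset.length_sort _

lemma kth_eq_get (A : Finset ℕ) (i : ℕ) (h : i < (A.sort (· ≤ ·)).length) :
    kth A i = (A.sort (· ≤ ·)).get ⟨i, h⟩ := by
  unfold kth; exact List.getD_eq_getElem _ _ h

lemma kth_mem (A : Finset ℕ) {i : ℕ} (h : i < A.card) : kth A i ∈ A := by
  have h' : i < (A.sort (· ≤ ·)).length := by rwa [length_sort']
  rw [kth_eq_get A i h', ← Finset.mem_sort (α := ℕ) (· ≤ ·)]
  exact List.mem_iff_get.mpr ⟨⟨i, h'⟩, rfl⟩

lemma kth_lt_kth (A : Finset ℕ) {i j : ℕ} (hij : i < j) (hj : j < A.card) :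
    kth A i < kth A j := by
  have hj' : j < (A.sort (· ≤ ·)).length := by rwa [length_sort']
  have hi' : i < (A.sort (· ≤ ·)).length := lt_trans (by omega) hj'
  have hs : List.Pairwise (· < ·) (A.sort (· ≤ ·)) :=
    ((Finset.pairwise_sort A (· ≤ ·)).and (Finset.sort_nodup A (· ≤ ·))).imp
      (fun h => lt_of_le_of_ne h.1 h.2)
  rw [kth_eq_get A i hi', kth_eq_get A j hj']
  exact List.pairwise_iff_get.mp hs ⟨i, hi'⟩ ⟨j, hj'⟩ hij

lemma kth_le_kth_of_le (A : Finset ℕ) {i j : ℕ} (hij : i ≤ j) (hj : j < A.card) :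
    kth A i ≤ kth A j := by
  rcases eq_or_lt_of_le hij with rfl | h
  · exact le_refl _
  · exact le_of_lt (kth_lt_kth A h hj)

lemma cnt_le_card (A : Finset ℕ) (v : ℕ) : cnt A v ≤ A.card :=
  Finset.card_filter_le _ _

/-- K3a : if at least `i+1` elements are `≤ v`, then the `i`-th smallest is `≤ v`. -/
lemma kth_le_of_lt_cnt (A : Finset ℕ) {i v : ℕ} (h : i < cnt A v) : kth A i ≤ v := by
  by_contra hgt
  push_neg at hgt
  have hi : i < A.card := lt_of_lt_of_le h (cnt_le_card A v)
  -- every element ≤ v is kth A j for some j < i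
  have : A.filter (fun a => a ≤ v) ⊆ (Finset.range i).image (kth A) := by
    intro a ha
    rw [Finset.mem_filter] at ha
    obtain ⟨haA, hav⟩ := ha
    have : a ∈ A.sort (· ≤ ·) := by rwa [Finset.mem_sort]
    obtain ⟨⟨j, hj⟩, hja⟩ := List.mem_iff_get.mp this
    have hja' : kth A j = a := by rw [kth_eq_get A j hj]; exact hja
    have hjcard : j < A.card := by rwa [length_sort'] at hj
    have hji : j < i := by
      by_contra hge
      push_neg at hge
      have := kth_le_kth_of_le A hge hjcard
      omega
    exact Finset.mem_image.mpr ⟨j, Finset.mem_range.mpr hji, hja'⟩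
  have hle := Finset.card_le_card this
  have := Finset.card_image_le (s := Finset.range i) (f := kth A)
  rw [Finset.card_range] at this
  unfold cnt at h
  omega

/-- K3b : the `i`-th smallest element has at least `i+1` elements `≤` it. -/
lemma lt_cnt_kth (A : Finset ℕ) {i : ℕ} (h : i < A.card) : i < cnt A (kth A i) := by
  have hsub : (Finset.range (i+1)).image (kth A) ⊆ A.filter (fun a => a ≤ kth A i) := by
    intro a ha
    obtain ⟨j, hj, rfl⟩ := Finset.mem_image.mp ha
    rw [Finset.mem_range] at hj
    refine Finset.mem_filter.mpr ⟨kth_mem A (by omega), kth_le_kth_of_le A (by omega) h⟩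
  have hinj : Set.InjOn (kth A) (Finset.range (i+1) : Finset ℕ) := by
    intro x hx y hy hxy
    simp only [Finset.coe_range, Set.mem_Iio] at hx hy
    by_contra hne
    rcases lt_or_gt_of_ne hne with hlt | hlt
    · have := kth_lt_kth A hlt (by omega); omega
    · have := kth_lt_kth A hlt (by omega); omega
  have h1 : ((Finset.range (i+1)).image (kth A)).card = i + 1 := by
    rw [Finset.card_image_of_injOn hinj, Finset.card_range]
  have := Finset.card_le_card hsub
  unfold cnt
  omega

/-- K4 : domination from counts. -/
lemma domle_of_cnt {B A : Finset ℕ} (hcard : B.card = A.card)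
    (hcnt : ∀ v, cnt A v ≤ cnt B v) : DomLE B A := by
  refine ⟨hcard, ?_⟩
  intro i hB hA
  rw [← kth_eq_get B i hB, ← kth_eq_get A i hA]
  have hiA : i < A.card := by rwa [length_sort'] at hA
  have h1 : i < cnt A (kth A i) := lt_cnt_kth A hiA
  have h2 : i < cnt B (kth A i) := lt_of_lt_of_le h1 (hcnt _)
  exact kth_le_of_lt_cnt B h2

/-- lower bound : if all elements are `≥ c` then `kth A i ≥ c + i`. -/
lemma le_kth_of_lb {A : Finset ℕ} {c : ℕ} (hc : ∀ a ∈ A, c ≤ a) {i : ℕ} (h : i < A.card) :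
    c + i ≤ kth A i := by
  induction i with
  | zero => simpa using hc _ (kth_mem A h)
  | succ j ih =>
    have h1 := ih (by omega)
    have h2 : kth A j < kth A (j+1) := kth_lt_kth A (by omega) h
    omega

lemma kth_le_of_mem_le {A : Finset ℕ} {v : ℕ} (h : ∃ a ∈ A, a ≤ v) : kth A 0 ≤ v := by
  obtain ⟨a, ha, hav⟩ := h
  apply kth_le_of_lt_cnt
  have : a ∈ A.filter (fun x => x ≤ v) := Finset.mem_filter.mpr ⟨ha, hav⟩
  have := Finset.card_pos.mpr ⟨a, this⟩
  unfold cnt; omega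

/-- from DomLE : pointwise kth comparison. -/
lemma domle_kth {B A : Finset ℕ} (h : DomLE B A) {i : ℕ} (hi : i < B.card) :
    kth B i ≤ kth A i := by
  obtain ⟨hcard, hget⟩ := h
  have hB : i < (B.sort (· ≤ ·)).length := by rwa [length_sort']
  have hA : i < (A.sort (· ≤ ·)).length := by rw [length_sort']; omega
  rw [kth_eq_get B i hB, kth_eq_get A i hA]
  exact hget i hB hA

end BBtool

namespace BB
open BBtool

variable {n r : ℕ} {X : Finset ℕ} {𝒜 : Finset (Finset ℕ)}

lemma mem_chooseFam {A : Finset ℕ} : A ∈ chooseFam n r ↔ A ⊆ Finset.Icc 1 n ∧ A.card = r :=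
  Finset.mem_powersetCard

lemma mem_ge_one {A : Finset ℕ} (hA : A ∈ chooseFam n r) {a : ℕ} (ha : a ∈ A) : 1 ≤ a := by
  have := (mem_chooseFam.mp hA).1 ha
  exact (Finset.mem_Icc.mp this).1

lemma mem_le_n {A : Finset ℕ} (hA : A ∈ chooseFam n r) {a : ℕ} (ha : a ∈ A) : a ≤ n := by
  have := (mem_chooseFam.mp hA).1 ha
  exact (Finset.mem_Icc.mp this).2

lemma card_of_mem {A : Finset ℕ} (hA : A ∈ chooseFam n r) : A.card = r :=
  (mem_chooseFam.mp hA).2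

lemma Icc2_mem_chooseFam (hn : r + 1 ≤ n) (hr : 1 ≤ r) : Finset.Icc 2 (r+1) ∈ chooseFam n r := by
  rw [mem_chooseFam]
  constructor
  · intro a ha; rw [Finset.mem_Icc] at *; omega
  · rw [Nat.card_Icc]; omega

lemma cnt_le_of_lb {A : Finset ℕ} {c v : ℕ} (hc : 1 ≤ c) (hA : ∀ a ∈ A, c ≤ a) :
    cnt A v ≤ v + 1 - c := by
  have : A.filter (fun a => a ≤ v) ⊆ Finset.Icc c v := by
    intro a ha
    rw [Finset.mem_filter] at ha
    rw [Finset.mem_Icc]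
    exact ⟨hA a ha.1, ha.2⟩
  have := Finset.card_le_card this
  rw [Nat.card_Icc] at this
  unfold cnt; omega

lemma filter_Icc_le (a b v : ℕ) : (Finset.Icc a b).filter (fun x => x ≤ v) = Finset.Icc a (min b v) := by
  ext x
  simp only [Finset.mem_filter, Finset.mem_Icc, le_min_iff]
  omega

lemma cnt_Icc (a b v : ℕ) : cnt (Finset.Icc a b) v = min b v + 1 - a := by
  unfold cnt
  rw [filter_Icc_le, Nat.card_Icc]

/-- (i) : any `r`-set avoiding 1 dominates `[2, r+1]`. -/
lemma domle_Icc2 {A : Finset ℕ} (hA : A ∈ chooseFam n r) (h1 : 1 ∉ A) :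
    DomLE (Finset.Icc 2 (r+1)) A := by
  apply domle_of_cnt
  · rw [Nat.card_Icc, card_of_mem hA]; omega
  · intro v
    have hlb : ∀ a ∈ A, 2 ≤ a := by
      intro a ha
      have := mem_ge_one hA ha
      rcases Nat.lt_or_ge a 2 with h | h
      · interval_cases a <;> simp_all
      · exact h
    have h1' := cnt_le_of_lb (by norm_num) hlb (v := v)
    have h2' := cnt_le_card A v
    rw [card_of_mem hA] at h2'
    rw [cnt_Icc]
    omega

/-- membership of `[2,r+1]` in any LCIF with a 1-free member. -/
lemma Icc2_mem_lcif (h : IsLCIF n r 𝒜) (hn : r + 1 ≤ n) (hr : 1 ≤ r)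
    {A : Finset ℕ} (hA : A ∈ 𝒜) (h1 : 1 ∉ A) : Finset.Icc 2 (r+1) ∈ 𝒜 :=
  h.2.2 A hA _ (Icc2_mem_chooseFam hn hr) (domle_Icc2 (h.1 hA) h1)

lemma filter_sdiff_distrib (s t : Finset ℕ) (p : ℕ → Prop) [DecidablePred p] :
    (s \ t).filter p = (s.filter p) \ (t.filter p) := by
  ext a
  simp only [Finset.mem_filter, Finset.mem_sdiff]
  tauto

/-- C1 window lemma. -/
lemma window3 (h𝒜 : IsLCIF n r 𝒜) (hr : 3 ≤ r) (hn : r + 2 ≤ n)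
    {Aw : Finset ℕ} (hAw : Aw ∈ 𝒜) (hw1 : 1 ∉ Aw) (hw23 : 2 ∉ Aw ∨ 3 ∉ Aw)
    {C : Finset ℕ} (hC : C ∈ 𝒜) (hC1 : 1 ∉ C) :
    3 ≤ (C ∩ Finset.Icc 2 (r+2)).card := by
  by_contra hlt
  push_neg at hlt
  set P := C ∩ Finset.Icc 2 (r+2) with hP
  have hPsub : P ⊆ Finset.Icc 2 (r+2) := Finset.inter_subset_right
  have hcard_Icc : (Finset.Icc 2 (r+2)).card = r + 1 := by rw [Nat.card_Icc]; omega
  obtain ⟨P', hPP', hP'sub, hP'card⟩ :=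
    Finset.exists_subsuperset_card_eq hPsub (n := 2) (by omega) (by omega)
  set B := Finset.Icc 1 (r+2) \ P' with hB
  have hP'sub1 : P' ⊆ Finset.Icc 1 (r+2) := by
    intro a ha; have := hP'sub ha; rw [Finset.mem_Icc] at *; omega
  have hBcard : B.card = r := by
    rw [hB, Finset.card_sdiff_of_subset hP'sub1, Nat.card_Icc, hP'card]
    omega
  have hBmem : B ∈ chooseFam n r := by
    rw [mem_chooseFam]
    refine ⟨?_, hBcard⟩
    intro a ha
    rw [hB, Finset.mem_sdiff, Finset.mem_Icc] at ha
    rw [Finset.mem_Icc]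
    omega
  -- counts
  have hcntB : ∀ v, cnt B v = min (r+2) v - (P'.filter (fun x => x ≤ v)).card := by
    intro v
    unfold cnt
    rw [hB, filter_sdiff_distrib, Finset.card_sdiff_of_subset
        (Finset.filter_subset_filter _ hP'sub1), filter_Icc_le, Nat.card_Icc]
    omega
  have hpv2 : ∀ v, (P'.filter (fun x => x ≤ v)).card ≤ 2 := by
    intro v; have := Finset.card_filter_le P' (fun x => x ≤ v); omega
  have hpvlow : ∀ v, (P'.filter (fun x => x ≤ v)).card ≤ v - 1 := by
    intro v
    have : P'.filter (fun x => x ≤ v) ⊆ Finset.Icc 2 v := by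
      intro a ha
      rw [Finset.mem_filter] at ha
      have := hP'sub ha.1
      rw [Finset.mem_Icc] at *
      omega
    have := Finset.card_le_card this
    rw [Nat.card_Icc] at this
    omega
  -- witness count bound
  have hAwIcc := (mem_chooseFam.mp (h𝒜.1 hAw)).1
  have hAwr := card_of_mem (h𝒜.1 hAw)
  have hcntAw : ∀ v, cnt Aw v ≤ 1 + (v + 1 - 4) ∨ cnt Aw v ≤ v + 1 - 3 := by
    intro v
    rcases hw23 with h2 | h3
    · right
      apply cnt_le_of_lb (by norm_num)
      intro a ha
      have h1a := hAwIcc ha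
      rw [Finset.mem_Icc] at h1a
      have : a ≠ 1 := by rintro rfl; exact hw1 ha
      have : a ≠ 2 := by rintro rfl; exact h2 ha
      omega
    · left
      have hsub : Aw.filter (fun a => a ≤ v) ⊆ insert 2 (Finset.Icc 4 v) := by
        intro a ha
        rw [Finset.mem_filter] at ha
        have h1a := hAwIcc ha.1
        rw [Finset.mem_Icc] at h1a
        have hne3 : a ≠ 3 := by rintro rfl; exact h3 ha.1
        have hne1 : a ≠ 1 := by rintro rfl; exact hw1 ha.1
        rw [Finset.mem_insert, Finset.mem_Icc]
        omega
      have := Finset.card_le_card hsub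
      have h2 := Finset.card_insert_le 2 (Finset.Icc 4 v)
      rw [Nat.card_Icc] at h2
      unfold cnt
      omega
  -- conclude DomLE B Aw
  have hdom : DomLE B Aw := by
    apply domle_of_cnt
    · rw [hBcard, hAwr]
    · intro v
      have hc2 := cnt_le_card Aw v
      rw [hAwr] at hc2
      have hc3 : cnt Aw v ≤ v + 1 - 2 := by
        apply cnt_le_of_lb (by norm_num)
        intro a ha
        have h1a := hAwIcc ha
        rw [Finset.mem_Icc] at h1a
        have : a ≠ 1 := by rintro rfl; exact hw1 ha
        omega
      rw [hcntB v]
      have hp1 := hpv2 v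
      have hp2 := hpvlow v
      rcases hcntAw v with hc1 | hc1 <;> omega
  have hBA : B ∈ 𝒜 := h𝒜.2.2 Aw hAw B hBmem hdom
  -- but B ∩ C = ∅
  have hdisj : B ∩ C = ∅ := by
    rw [Finset.eq_empty_iff_forall_notMem]
    intro a ha
    rw [Finset.mem_inter, hB, Finset.mem_sdiff, Finset.mem_Icc] at ha
    obtain ⟨⟨⟨ha1, ha2⟩, haP'⟩, haC⟩ := ha
    have hane1 : a ≠ 1 := by rintro rfl; exact hC1 haC
    have : a ∈ P := by rw [hP, Finset.mem_inter, Finset.mem_Icc]; exact ⟨haC, by omega⟩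
    exact haP' (hPP' this)
  have := h𝒜.2.1 B hBA C hC
  rw [hdisj] at this
  exact Finset.not_nonempty_empty this

end BB

namespace BB
open BBtool

variable {n r : ℕ} {X : Finset ℕ} {𝒜 ℬ 𝒢 : Finset (Finset ℕ)}

lemma hit_mono (h : 𝒜 ⊆ ℬ) : hit X 𝒜 ≤ hit X ℬ :=
  Finset.card_le_card (Finset.filter_subset_filter _ h)

open Classical in
lemma exists_mlcif (h : IsLCIF n r 𝒜) : ∃ ℳ, IsMLCIF n r ℳ ∧ 𝒜 ⊆ ℳ := by
  classical
  set S := (chooseFam n r).powerset.filter (fun 𝒢 => IsLCIF n r 𝒢 ∧ 𝒜 ⊆ 𝒢) with hS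
  have hne : S.Nonempty := by
    refine ⟨𝒜, ?_⟩
    rw [hS, Finset.mem_filter, Finset.mem_powerset]
    exact ⟨h.1, h, Finset.Subset.refl _⟩
  obtain ⟨ℳ, hℳS, hmax⟩ := S.exists_max_image Finset.card hne
  rw [hS, Finset.mem_filter, Finset.mem_powerset] at hℳS
  refine ⟨ℳ, ⟨hℳS.2.1, ?_⟩, hℳS.2.2⟩
  intro ℬ hℬ hsub
  have hℬS : ℬ ∈ S := by
    rw [hS, Finset.mem_filter, Finset.mem_powerset]
    exact ⟨hℬ.1, hℬ, Finset.Subset.trans hℳS.2.2 hsub⟩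
  exact (Finset.eq_of_subset_of_card_le hsub (hmax ℬ hℬS)).symm

lemma hit_le_star (hopt : OptimalMLCIF n r X (starFam n r)) (h : IsLCIF n r 𝒢) :
    hit X 𝒢 ≤ hit X (starFam n r) := by
  obtain ⟨ℳ, hℳ, hsub⟩ := exists_mlcif h
  exact le_trans (hit_mono hsub) (hopt.2 ℳ hℳ)

/-! ### the family F₂ -/

def F2fam (n r : ℕ) : Finset (Finset ℕ) :=
  (chooseFam n r).filter (fun A => 2 ≤ (A ∩ Finset.Icc 1 3).card)

lemma kth_le_of_pair {A : Finset ℕ} {x y v : ℕ} (hx : x ∈ A) (hy : y ∈ A) (hxy : x ≠ y)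
    (hxv : x ≤ v) (hyv : y ≤ v) : kth A 1 ≤ v := by
  apply kth_le_of_lt_cnt
  have hsub : ({x, y} : Finset ℕ) ⊆ A.filter (fun a => a ≤ v) := by
    intro a ha
    rw [Finset.mem_insert, Finset.mem_singleton] at ha
    rcases ha with rfl | rfl <;> exact Finset.mem_filter.mpr ⟨by assumption, by assumption⟩
  have := Finset.card_le_card hsub
  rw [Finset.card_pair hxy] at this
  unfold cnt; omega

lemma F2_lcif (hr : 2 ≤ r) : IsLCIF n r (F2fam n r) := by
  refine ⟨Finset.filter_subset _ _, ?_, ?_⟩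
  · -- intersecting
    intro A hA B hB
    rw [F2fam, Finset.mem_filter] at hA hB
    have hcard := Finset.card_union_add_card_inter (A ∩ Finset.Icc 1 3) (B ∩ Finset.Icc 1 3)
    have hsub : (A ∩ Finset.Icc 1 3) ∪ (B ∩ Finset.Icc 1 3) ⊆ Finset.Icc 1 3 := by
      intro a ha
      rw [Finset.mem_union, Finset.mem_inter, Finset.mem_inter] at ha
      tauto
    have h3 := Finset.card_le_card hsub
    rw [Nat.card_Icc] at h3
    have hpos : 0 < ((A ∩ Finset.Icc 1 3) ∩ (B ∩ Finset.Icc 1 3)).card := by omega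
    obtain ⟨x, hx⟩ := Finset.card_pos.mp hpos
    rw [Finset.mem_inter, Finset.mem_inter, Finset.mem_inter] at hx
    exact ⟨x, Finset.mem_inter.mpr ⟨hx.1.1, hx.2.1⟩⟩
  · -- left-compressed
    intro A hA B hB hdom
    rw [F2fam, Finset.mem_filter] at hA ⊢
    refine ⟨hB, ?_⟩
    obtain ⟨hAc, hA2⟩ := hA
    have hBr : B.card = r := card_of_mem hB
    have hAr : A.card = r := card_of_mem hAc
    -- two elements of A in [1,3]
    have hpos : 0 < (A ∩ Finset.Icc 1 3).card := by omega
    obtain ⟨x, hx⟩ := Finset.card_pos.mp hpos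
    have h2 : 1 < (A ∩ Finset.Icc 1 3).card := hA2
    obtain ⟨y, hy, hyx⟩ : ∃ y ∈ A ∩ Finset.Icc 1 3, y ≠ x := by
      by_contra hcon
      push_neg at hcon
      have : A ∩ Finset.Icc 1 3 ⊆ {x} := fun a ha => Finset.mem_singleton.mpr (hcon a ha)
      have := Finset.card_le_card this
      rw [Finset.card_singleton] at this
      omega
    rw [Finset.mem_inter, Finset.mem_Icc] at hx hy
    have hkA1 : kth A 1 ≤ 3 := kth_le_of_pair hx.1 hy.1 (Ne.symm hyx) hx.2.2 hy.2.2
    have hkB1 : kth B 1 ≤ 3 := le_trans (domle_kth hdom (by omega)) hkA1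
    have hkB0 : kth B 0 < kth B 1 := kth_lt_kth B (by omega) (by omega)
    have hb0 : kth B 0 ∈ B := kth_mem B (by omega)
    have hb1 : kth B 1 ∈ B := kth_mem B (by omega)
    have hge : 1 ≤ kth B 0 := mem_ge_one hB hb0
    have hsub : ({kth B 0, kth B 1} : Finset ℕ) ⊆ B ∩ Finset.Icc 1 3 := by
      intro a ha
      rw [Finset.mem_insert, Finset.mem_singleton] at ha
      rw [Finset.mem_inter, Finset.mem_Icc]
      rcases ha with rfl | rfl
      · exact ⟨hb0, by omega⟩
      · exact ⟨hb1, by omega⟩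
    have := Finset.card_le_card hsub
    rw [Finset.card_pair (by omega)] at this
    omega

/-! ### AHM is an LCIF for `3 ≤ t ≤ r+1` -/

lemma mem_AHM {t : ℕ} {A : Finset ℕ} :
    A ∈ AHM n r t ↔ A ∈ chooseFam n r ∧
      ((1 ∈ A ∧ (A ∩ Finset.Icc 2 t).Nonempty) ∨ Finset.Icc 2 t ⊆ A) := by
  rw [AHM, Finset.mem_filter]

lemma AHM_lcif {t : ℕ} (hr : 2 ≤ r) (ht3 : 3 ≤ t) (htr : t ≤ r + 1) :
    IsLCIF n r (AHM n r t) := by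
  refine ⟨Finset.filter_subset _ _, ?_, ?_⟩
  · -- intersecting
    intro A hA B hB
    rw [mem_AHM] at hA hB
    rcases hA.2 with ⟨hA1, x, hx⟩ | hA2 <;> rcases hB.2 with ⟨hB1, y, hy⟩ | hB2
    · exact ⟨1, Finset.mem_inter.mpr ⟨hA1, hB1⟩⟩
    · rw [Finset.mem_inter] at hx
      exact ⟨x, Finset.mem_inter.mpr ⟨hx.1, hB2 hx.2⟩⟩
    · rw [Finset.mem_inter] at hy
      exact ⟨y, Finset.mem_inter.mpr ⟨hA2 hy.2, hy.1⟩⟩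
    · refine ⟨2, Finset.mem_inter.mpr ⟨hA2 ?_, hB2 ?_⟩⟩ <;> (rw [Finset.mem_Icc]; omega)
  · -- left-compressed
    intro A hA B hB hdom
    rw [mem_AHM] at hA ⊢
    refine ⟨hB, ?_⟩
    obtain ⟨hAc, hA2⟩ := hA
    have hBr : B.card = r := card_of_mem hB
    have hAr : A.card = r := card_of_mem hAc
    have hb0ge : 1 ≤ kth B 0 := mem_ge_one hB (kth_mem B (by omega))
    rcases hA2 with ⟨hA1, x, hx⟩ | hA2
    · -- clause 1 for A
      rw [Finset.mem_inter, Finset.mem_Icc] at hx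
      have hkA0 : kth A 0 ≤ 1 := kth_le_of_mem_le ⟨1, hA1, le_refl 1⟩
      have hkB0 : kth B 0 ≤ 1 := le_trans (domle_kth hdom (by omega)) hkA0
      have h1B : 1 ∈ B := by
        have := kth_mem B (show 0 < B.card by omega)
        have : kth B 0 = 1 := by omega
        rw [← this]; exact kth_mem B (by omega)
      have hkA1 : kth A 1 ≤ t := kth_le_of_pair hA1 hx.1 (by omega) (by omega) hx.2.2
      have hkB1 : kth B 1 ≤ t := le_trans (domle_kth hdom (by omega)) hkA1
      have hlt : kth B 0 < kth B 1 := kth_lt_kth B (by omega) (by omega)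
      left
      refine ⟨h1B, kth B 1, Finset.mem_inter.mpr ⟨kth_mem B (by omega), ?_⟩⟩
      rw [Finset.mem_Icc]
      omega
    · -- clause 2 for A
      have hkAle : ∀ i, i ≤ t - 2 → kth A i ≤ i + 2 := by
        intro i hi
        apply kth_le_of_lt_cnt
        have hsub : Finset.Icc 2 (i+2) ⊆ A.filter (fun a => a ≤ i + 2) := by
          intro a ha
          rw [Finset.mem_Icc] at ha
          refine Finset.mem_filter.mpr ⟨hA2 ?_, by omega⟩
          rw [Finset.mem_Icc]; omega
        have := Finset.card_le_card hsub
        rw [Nat.card_Icc] at this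
        unfold cnt at *
        omega
      have hkBle : ∀ i, i ≤ t - 2 → kth B i ≤ i + 2 := by
        intro i hi
        exact le_trans (domle_kth hdom (by omega)) (hkAle i hi)
      by_cases h1B : 1 ∈ B
      · left
        refine ⟨h1B, kth B 1, Finset.mem_inter.mpr ⟨kth_mem B (by omega), ?_⟩⟩
        have h1 : kth B 1 ≤ 3 := hkBle 1 (by omega)
        have h0 : kth B 0 < kth B 1 := kth_lt_kth B (by omega) (by omega)
        rw [Finset.mem_Icc]
        omega
      · right
        have hlb : ∀ a ∈ B, 2 ≤ a := by
          intro a ha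
          have := mem_ge_one hB ha
          have : a ≠ 1 := by rintro rfl; exact h1B ha
          omega
        have hge : ∀ i, i < B.card → i + 2 ≤ kth B i := by
          intro i hi
          have := le_kth_of_lb hlb hi
          omega
        intro v hv
        rw [Finset.mem_Icc] at hv
        have hvi : v - 2 ≤ t - 2 := by omega
        have h1 := hkBle (v-2) hvi
        have h2 := hge (v-2) (by omega)
        have : kth B (v-2) = v := by omega
        rw [← this]
        exact kth_mem B (by omega)

end BB

namespace BB
open BBtool

variable {n r : ℕ} {X : Finset ℕ}

/-- generic injection: inserting two fixed fresh elements. -/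
lemma choose_le_card_of_insert2 {G : Finset ℕ} {a b : ℕ} {k : ℕ} {F : Finset (Finset ℕ)}
    (ha : a ∉ G) (hb : b ∉ G) (hab : a ≠ b)
    (hmem : ∀ T ∈ G.powersetCard k, insert a (insert b T) ∈ F) :
    G.card.choose k ≤ F.card := by
  rw [← Finset.card_powersetCard]
  apply Finset.card_le_card_of_injOn _ hmem
  intro T₁ h₁ T₂ h₂ heq
  simp only [Finset.mem_coe, Finset.mem_powersetCard] at h₁ h₂
  have key : ∀ T : Finset ℕ, T ⊆ G → ((insert a (insert b T)).erase a).erase b = T := by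
    intro T hT
    have haT : a ∉ insert b T := by
      rw [Finset.mem_insert]
      push_neg
      exact ⟨hab, fun h => ha (hT h)⟩
    rw [Finset.erase_insert haT, Finset.erase_insert (fun h => hb (hT h))]
  dsimp only at heq
  rw [← key T₁ h₁.1, ← key T₂ h₂.1, heq]

/-- generic injection: erasing two fixed elements. -/
lemma card_le_choose_of_erase2 {G : Finset ℕ} {a b : ℕ} {k : ℕ} {F : Finset (Finset ℕ)}
    (hab : a ≠ b)
    (hmem : ∀ A ∈ F, a ∈ A ∧ b ∈ A ∧ (A.erase a).erase b ∈ G.powersetCard k) :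
    F.card ≤ G.card.choose k := by
  rw [← Finset.card_powersetCard]
  apply Finset.card_le_card_of_injOn (fun A => (A.erase a).erase b)
      (fun A hA => (hmem A hA).2.2)
  intro A₁ h₁ A₂ h₂ heq
  have key : ∀ A : Finset ℕ, A ∈ F → insert a (insert b ((A.erase a).erase b)) = A := by
    intro A hA
    obtain ⟨haA, hbA, _⟩ := hmem A hA
    rw [Finset.insert_erase (Finset.mem_erase.mpr ⟨Ne.symm hab, hbA⟩), Finset.insert_erase haA]
  dsimp only at heq
  rw [← key A₁ h₁, ← key A₂ h₂, heq]

/-- generic injection: erasing three fixed elements. -/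
lemma card_le_choose_of_erase3 {G : Finset ℕ} {a b c : ℕ} {k : ℕ} {F : Finset (Finset ℕ)}
    (hab : a ≠ b) (hac : a ≠ c) (hbc : b ≠ c)
    (hmem : ∀ A ∈ F, a ∈ A ∧ b ∈ A ∧ c ∈ A ∧ ((A.erase a).erase b).erase c ∈ G.powersetCard k) :
    F.card ≤ G.card.choose k := by
  rw [← Finset.card_powersetCard]
  apply Finset.card_le_card_of_injOn (fun A => ((A.erase a).erase b).erase c)
      (fun A hA => (hmem A hA).2.2.2)
  intro A₁ h₁ A₂ h₂ heq
  have key : ∀ A : Finset ℕ, A ∈ F → insert a (insert b (insert c (((A.erase a).erase b).erase c))) = A := by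
    intro A hA
    obtain ⟨haA, hbA, hcA, _⟩ := hmem A hA
    rw [Finset.insert_erase (Finset.mem_erase.mpr ⟨Ne.symm hbc,
          Finset.mem_erase.mpr ⟨Ne.symm hac, hcA⟩⟩),
        Finset.insert_erase (Finset.mem_erase.mpr ⟨Ne.symm hab, hbA⟩),
        Finset.insert_erase haA]
  dsimp only at heq
  rw [← key A₁ h₁, ← key A₂ h₂, heq]

/-- master binomial inequality. -/
lemma master_binom {K c k n : ℕ} (h1 : 2*(c+k)+2 ≤ n) (h2 : K*(k+1)*2^(k+1) < n) :
    K * n.choose k < (n-c).choose (k+1) := by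
  have hd1 : n.descFactorial k = k.factorial * n.choose k :=
    Nat.descFactorial_eq_factorial_mul_choose n k
  have hd2 : (n-c).descFactorial (k+1) = (k+1).factorial * (n-c).choose (k+1) :=
    Nat.descFactorial_eq_factorial_mul_choose _ _
  have hub : n.descFactorial k ≤ n ^ k := Nat.descFactorial_le_pow n k
  have hlb : (n - c - k) ^ (k+1) ≤ (n-c).descFactorial (k+1) := by
    have := Nat.pow_sub_le_descFactorial (n-c) (k+1)
    have heq : n - c + 1 - (k+1) = n - c - k := by omega
    rwa [heq] at this
  have hmid : K*(k+1)*(n ^ k) < (n - c - k)^(k+1) := by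
    have hstep : 2^(k+1) * (K*(k+1)*(n^k)) < 2^(k+1) * ((n-c-k)^(k+1)) := by
      calc 2^(k+1) * (K*(k+1)*(n^k)) = (K*(k+1)*2^(k+1)) * n^k := by ring
        _ < n * n^k := by
            have hnk : 0 < n ^ k := Nat.pow_pos (by omega)
            exact Nat.mul_lt_mul_of_lt_of_le h2 (le_refl _) hnk
        _ = n^(k+1) := by ring
        _ ≤ (2*(n-c-k))^(k+1) := Nat.pow_le_pow_left (by omega) _
        _ = 2^(k+1) * (n-c-k)^(k+1) := by rw [Nat.mul_pow]
    exact Nat.lt_of_mul_lt_mul_left hstep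
  have hchain : (k+1).factorial * (K * n.choose k) < (k+1).factorial * ((n-c).choose (k+1)) := by
    calc (k+1).factorial * (K * n.choose k)
        = K * (k+1) * (k.factorial * n.choose k) := by
          rw [Nat.factorial_succ]; ring
      _ = K * (k+1) * n.descFactorial k := by rw [hd1]
      _ ≤ K * (k+1) * n^k := Nat.mul_le_mul_left _ hub
      _ < (n-c-k)^(k+1) := hmid
      _ ≤ (n-c).descFactorial (k+1) := hlb
      _ = (k+1).factorial * (n-c).choose (k+1) := hd2
  exact Nat.lt_of_mul_lt_mul_left hchain

/-- double counting : hitting `k`-sets vs hitting `(k+1)`-sets. -/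
lemma hgrow {G : Finset ℕ} {k : ℕ} :
    ((G.powersetCard k).filter (fun T => (T ∩ X).Nonempty)).card * (G.card - k)
      ≤ ((G.powersetCard (k+1)).filter (fun T => (T ∩ X).Nonempty)).card * (k+1) := by
  classical
  set S1 := (G.powersetCard k).filter (fun T => (T ∩ X).Nonempty) with hS1
  set S2 := (G.powersetCard (k+1)).filter (fun T => (T ∩ X).Nonempty) with hS2
  apply Finset.card_mul_le_card_mul (fun T T' => T ⊆ T')
  · intro T hT
    rw [hS1, Finset.mem_filter, Finset.mem_powersetCard] at hT
    obtain ⟨⟨hTG, hTk⟩, hThit⟩ := hT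
    have hinj : ∀ y ∈ G \ T, insert y T ∈ Finset.bipartiteAbove (fun T T' => T ⊆ T') S2 T := by
      intro y hy
      rw [Finset.mem_sdiff] at hy
      rw [Finset.mem_bipartiteAbove]
      constructor
      · rw [hS2, Finset.mem_filter, Finset.mem_powersetCard]
        refine ⟨⟨?_, ?_⟩, ?_⟩
        · intro x hx
          rw [Finset.mem_insert] at hx
          rcases hx with rfl | hx
          · exact hy.1
          · exact hTG hx
        · rw [Finset.card_insert_of_notMem hy.2, hTk]
        · obtain ⟨x, hx⟩ := hThit
          rw [Finset.mem_inter] at hx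
          exact ⟨x, Finset.mem_inter.mpr ⟨Finset.mem_insert_of_mem hx.1, hx.2⟩⟩
      · exact Finset.subset_insert _ _
    have hinj2 : Set.InjOn (fun y => insert y T) (G \ T : Finset ℕ) := by
      intro y hy y' hy' heq
      simp only [Finset.coe_sdiff, Set.mem_diff, Finset.mem_coe] at hy hy'
      by_contra hne
      dsimp only at heq
      have : y ∈ insert y' T := by rw [← heq]; exact Finset.mem_insert_self _ _
      rw [Finset.mem_insert] at this
      rcases this with h | h
      · exact hne h
      · exact hy.2 h
    calc G.card - k = (G \ T).card := by rw [Finset.card_sdiff_of_subset hTG, hTk]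
      _ ≤ _ := Finset.card_le_card_of_injOn _ hinj hinj2
  · intro T' hT'
    rw [hS2, Finset.mem_filter, Finset.mem_powersetCard] at hT'
    have hsub : Finset.bipartiteBelow (fun T T' => T ⊆ T') S1 T' ⊆ T'.powersetCard k := by
      intro T hT
      rw [Finset.mem_bipartiteBelow] at hT
      rw [Finset.mem_powersetCard]
      obtain ⟨hTS1, hTT'⟩ := hT
      rw [hS1, Finset.mem_filter, Finset.mem_powersetCard] at hTS1
      exact ⟨hTT', hTS1.1.2⟩
    have := Finset.card_le_card hsub
    rw [Finset.card_powersetCard, hT'.1.2, Nat.choose_succ_self_right] at this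
    exact this

end BB

namespace BB
open BBtool

variable {n r : ℕ} {X : Finset ℕ}

lemma hit_star_eq :
    hit X (starFam n r) =
      ((chooseFam n r).filter (fun A => 1 ∈ A ∧ (A ∩ X).Nonempty)).card := by
  rw [hit, starFam, Finset.filter_filter]

lemma beater {q : Finset ℕ → Prop} [DecidablePred q] {𝒢 ρ : Finset (Finset ℕ)}
    (hq : ∀ A ∈ chooseFam n r, 1 ∈ A → (A ∩ X).Nonempty → q A → A ∈ 𝒢)
    (hρsub : ∀ A ∈ ρ, A ∈ 𝒢 ∧ (A ∩ X).Nonempty ∧ 1 ∉ A)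
    (hlt : ((chooseFam n r).filter (fun A => (1 ∈ A ∧ (A ∩ X).Nonempty) ∧ ¬ q A)).card < ρ.card) :
    hit X (starFam n r) < hit X 𝒢 := by
  classical
  rw [hit_star_eq]
  set T := (chooseFam n r).filter (fun A => 1 ∈ A ∧ (A ∩ X).Nonempty) with hT
  have hsplit := Finset.card_filter_add_card_filter_not (s := T) q
  have hTnq : T.filter (fun A => ¬ q A) =
      (chooseFam n r).filter (fun A => (1 ∈ A ∧ (A ∩ X).Nonempty) ∧ ¬ q A) := by
    rw [hT, Finset.filter_filter]
  have hsub : T.filter q ∪ ρ ⊆ 𝒢.filter (fun A => (A ∩ X).Nonempty) := by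
    intro A hA
    rw [Finset.mem_union] at hA
    rcases hA with hA | hA
    · rw [Finset.mem_filter, hT, Finset.mem_filter] at hA
      exact Finset.mem_filter.mpr ⟨hq A hA.1.1 hA.1.2.1 hA.1.2.2 hA.2, hA.1.2.2⟩
    · exact Finset.mem_filter.mpr ⟨(hρsub A hA).1, (hρsub A hA).2.1⟩
  have hdisj : Disjoint (T.filter q) ρ := by
    rw [Finset.disjoint_left]
    intro A hA hAρ
    rw [Finset.mem_filter, hT, Finset.mem_filter] at hA
    exact (hρsub A hAρ).2.2 hA.1.2.1
  have hcard := Finset.card_le_card hsub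
  rw [Finset.card_union_of_disjoint hdisj] at hcard
  rw [hit]
  rw [hTnq] at hsplit
  omega

lemma claimA (hr : 3 ≤ r) (hn : r + 4 ≤ n) (hXsub : X ⊆ Finset.Icc 2 n) (hXne : X.Nonempty)
    (hopt : OptimalMLCIF n r X (starFam n r)) : r + 2 ≤ X.max' hXne := by
  classical
  by_contra hcon
  push_neg at hcon
  set m := X.max' hXne with hm
  have hmX : m ∈ X := X.max'_mem hXne
  have hm2 : 2 ≤ m := (Finset.mem_Icc.mp (hXsub hmX)).1
  have hmn : m ≤ n := (Finset.mem_Icc.mp (hXsub hmX)).2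
  have hle : ∀ x ∈ X, x ≤ m := fun x hx => X.le_max' x hx
  rcases eq_or_lt_of_le hm2 with hEq | hm3
  · -- m = 2, use F₂
    have hbeat : hit X (starFam n r) < hit X (F2fam n r) := by
      apply beater (q := fun A => 2 ∈ A ∨ 3 ∈ A)
        (ρ := {insert 2 (insert 3 (Finset.Icc 4 (r+1)))})
      · intro A hA h1 hhit hq
        rw [F2fam, Finset.mem_filter]
        refine ⟨hA, ?_⟩
        have hpair : ∀ x, x ∈ A → x ∈ ({2, 3} : Finset ℕ) →
            ({1, x} : Finset ℕ) ⊆ A ∩ Finset.Icc 1 3 := by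
          intro x hx hx3
          intro a ha
          rw [Finset.mem_insert, Finset.mem_singleton] at ha hx3
          rw [Finset.mem_inter, Finset.mem_Icc]
          rcases ha with rfl | rfl
          · exact ⟨h1, by omega⟩
          · rcases hx3 with rfl | rfl <;> exact ⟨hx, by omega⟩
        rcases hq with h2 | h3
        · have := Finset.card_le_card (hpair 2 h2 (by simp))
          rw [Finset.card_pair (by omega)] at this
          omega
        · have := Finset.card_le_card (hpair 3 h3 (by simp))
          rw [Finset.card_pair (by omega)] at this
          omega
      · intro A hA
        rw [Finset.mem_singleton] at hA
        subst hA
        set A₀ := insert 2 (insert 3 (Finset.Icc 4 (r+1))) with hA₀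
        have h2i : (2:ℕ) ∉ insert 3 (Finset.Icc 4 (r+1)) := by
          rw [Finset.mem_insert, Finset.mem_Icc]; omega
        have h3i : (3:ℕ) ∉ Finset.Icc 4 (r+1) := by rw [Finset.mem_Icc]; omega
        have h2m : 2 ∈ A₀ := Finset.mem_insert_self _ _
        have h3m : 3 ∈ A₀ := Finset.mem_insert_of_mem (Finset.mem_insert_self _ _)
        have hAc : A₀ ∈ chooseFam n r := by
          rw [mem_chooseFam]
          constructor
          · intro a ha
            rw [hA₀, Finset.mem_insert, Finset.mem_insert, Finset.mem_Icc] at ha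
            rw [Finset.mem_Icc]
            rcases ha with rfl | rfl | h <;> omega
          · rw [hA₀, Finset.card_insert_of_notMem h2i, Finset.card_insert_of_notMem h3i,
                Nat.card_Icc]
            omega
        refine ⟨?_, ?_, ?_⟩
        · rw [F2fam, Finset.mem_filter]
          refine ⟨hAc, ?_⟩
          have : ({2, 3} : Finset ℕ) ⊆ A₀ ∩ Finset.Icc 1 3 := by
            intro a ha
            rw [Finset.mem_insert, Finset.mem_singleton] at ha
            rw [Finset.mem_inter, Finset.mem_Icc]
            rcases ha with rfl | rfl <;> exact ⟨by assumption, by omega⟩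
          have := Finset.card_le_card this
          rw [Finset.card_pair (by omega)] at this
          omega
        · refine ⟨2, Finset.mem_inter.mpr ⟨h2m, ?_⟩⟩
          rw [← hEq] at hmX
          exact hmX
        · rw [hA₀, Finset.mem_insert, Finset.mem_insert, Finset.mem_Icc]; omega
      · -- LHS = 0 < ρ
        have hLHS : ((chooseFam n r).filter
            (fun A => (1 ∈ A ∧ (A ∩ X).Nonempty) ∧ ¬ (2 ∈ A ∨ 3 ∈ A))).card = 0 := by
          rw [Finset.card_eq_zero, Finset.filter_eq_empty_iff]
          rintro A hA ⟨⟨h1, x, hx⟩, hq⟩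
          push_neg at hq
          rw [Finset.mem_inter] at hx
          have hx2 : x = 2 := by
            have := hle x hx.2
            have := (Finset.mem_Icc.mp (hXsub hx.2)).1
            omega
          exact hq.1 (hx2 ▸ hx.1)
        rw [hLHS, Finset.card_singleton]
        omega
    have := hit_le_star hopt (F2_lcif (by omega))
    omega
  · -- 3 ≤ m ≤ r+1, use AHM m
    have hbeat : hit X (starFam n r) < hit X (AHM n r m) := by
      apply beater (q := fun A => (A ∩ Finset.Icc 2 m).Nonempty)
        (ρ := {Finset.Icc 2 (r+1)})
      · intro A hA h1 hhit hq
        rw [mem_AHM]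
        exact ⟨hA, Or.inl ⟨h1, hq⟩⟩
      · intro A hA
        rw [Finset.mem_singleton] at hA
        subst hA
        refine ⟨?_, ?_, ?_⟩
        · rw [mem_AHM]
          refine ⟨Icc2_mem_chooseFam (by omega) (by omega), Or.inr ?_⟩
          intro a ha
          rw [Finset.mem_Icc] at *
          omega
        · exact ⟨m, Finset.mem_inter.mpr ⟨by rw [Finset.mem_Icc]; omega, hmX⟩⟩
        · rw [Finset.mem_Icc]; omega
      · have hLHS : ((chooseFam n r).filter
            (fun A => (1 ∈ A ∧ (A ∩ X).Nonempty) ∧ ¬ (A ∩ Finset.Icc 2 m).Nonempty)).card = 0 := by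
          rw [Finset.card_eq_zero, Finset.filter_eq_empty_iff]
          rintro A hA ⟨⟨h1, x, hx⟩, hq⟩
          rw [Finset.mem_inter] at hx
          apply hq
          refine ⟨x, Finset.mem_inter.mpr ⟨hx.1, ?_⟩⟩
          rw [Finset.mem_Icc]
          exact ⟨(Finset.mem_Icc.mp (hXsub hx.2)).1, hle x hx.2⟩
        rw [hLHS, Finset.card_singleton]
        omega
    have := hit_le_star hopt (AHM_lcif (by omega) hm3 (by omega))
    omega

end BB

namespace BB
open BBtool

variable {n r : ℕ} {X : Finset ℕ}

lemma choose_le_pow' (a k : ℕ) : a.choose k ≤ a ^ k := by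
  have h := Nat.descFactorial_le_pow a k
  have h2 := Nat.descFactorial_eq_factorial_mul_choose a k
  have h3 : 1 ≤ k.factorial := Nat.one_le_iff_ne_zero.mpr (Nat.factorial_ne_zero k)
  calc a.choose k ≤ k.factorial * a.choose k := Nat.le_mul_of_pos_left _ (by omega)
    _ = a.descFactorial k := h2.symm
    _ ≤ a ^ k := h

lemma core (hr : 3 ≤ r) (hXsub : X ⊆ Finset.Icc 2 n) (hXne : X.Nonempty)
    (hm2 : r + 2 ≤ X.max' hXne)
    (hbig1 : 2*((r+2) + (r-3)) + 2 ≤ n)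
    (hbig2 : ((r+1).choose 3 + r)*((r-3)+1)*2^((r-3)+1) < n)
    (hbig3 : 2*(1 + (r-3)) + 2 ≤ n - 4)
    (hbig4 : 1*((r-3)+1)*2^((r-3)+1) < n - 4)
    (hbig5 : 4*r + 8 ≤ n)
    {𝒜 : Finset (Finset ℕ)} (h𝒜 : IsLCIF n r 𝒜)
    (hW : ∃ A ∈ 𝒜, 1 ∉ A)
    (hopt : OptimalMLCIF n r X (starFam n r)) :
    hit X 𝒜 < hit X (starFam n r) := by
  classical
  set m := X.max' hXne with hmdef
  have hmX : m ∈ X := X.max'_mem hXne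
  have hmn : m ≤ n := (Finset.mem_Icc.mp (hXsub hmX)).2
  have hle : ∀ x ∈ X, x ≤ m := fun x hx => X.le_max' x hx
  have hxge : ∀ x ∈ X, 2 ≤ x := fun x hx => (Finset.mem_Icc.mp (hXsub hx)).1
  obtain ⟨Aw0, hAw0, hAw01⟩ := hW
  have hIcc2 : Finset.Icc 2 (r+1) ∈ 𝒜 :=
    Icc2_mem_lcif h𝒜 (by omega) (by omega) hAw0 hAw01
  -- split the hitters of 𝒜
  set Hit := 𝒜.filter (fun A => (A ∩ X).Nonempty) with hHit
  set B1 := Hit.filter (fun A => 1 ∈ A) with hB1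
  set Wh := Hit.filter (fun A => ¬ 1 ∈ A) with hWh
  have hsplit : B1.card + Wh.card = Hit.card :=
    Finset.card_filter_add_card_filter_not (p := fun A => 1 ∈ A)
  set SH := (starFam n r).filter (fun A => (A ∩ X).Nonempty) with hSH
  have hB1SH : B1 ⊆ SH := by
    intro A hA
    rw [hB1, Finset.mem_filter, hHit, Finset.mem_filter] at hA
    rw [hSH, Finset.mem_filter, starFam, Finset.mem_filter]
    exact ⟨⟨h𝒜.1 hA.1.1, hA.2⟩, hA.1.2⟩
  have hB1A : B1 ⊆ 𝒜 := by
    intro A hA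
    rw [hB1, Finset.mem_filter, hHit, Finset.mem_filter] at hA
    exact hA.1.1
  have hWhmem : ∀ A ∈ Wh, A ∈ 𝒜 ∧ (A ∩ X).Nonempty ∧ 1 ∉ A := by
    intro A hA
    rw [hWh, Finset.mem_filter, hHit, Finset.mem_filter] at hA
    exact ⟨hA.1.1, hA.1.2, hA.2⟩
  have hhitA : hit X 𝒜 = Hit.card := rfl
  have hhitS : hit X (starFam n r) = SH.card := rfl
  -- final assembly device
  have hfin : ∀ Ψ : Finset (Finset ℕ), Ψ ⊆ SH → (∀ A ∈ Ψ, A ∉ 𝒜) → Wh.card < Ψ.card →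
      hit X 𝒜 < hit X (starFam n r) := by
    intro Ψ hΨSH hΨA hΨlt
    have hdisj : Disjoint B1 Ψ := by
      rw [Finset.disjoint_left]
      intro A hA hA'
      exact hΨA A hA' (hB1A hA)
    have hsub : B1 ∪ Ψ ⊆ SH := Finset.union_subset hB1SH hΨSH
    have hcard := Finset.card_le_card hsub
    rw [Finset.card_union_of_disjoint hdisj] at hcard
    rw [hhitA, hhitS]
    omega
  -- the always-available deficiency set D_G
  set DG := (chooseFam n r).filter
      (fun A => 1 ∈ A ∧ A ∩ Finset.Icc 2 (r+1) = ∅ ∧ (A ∩ X).Nonempty) with hDG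
  have hDGSH : DG ⊆ SH := by
    intro A hA
    rw [hDG, Finset.mem_filter] at hA
    rw [hSH, Finset.mem_filter, starFam, Finset.mem_filter]
    exact ⟨⟨hA.1, hA.2.1⟩, hA.2.2.2⟩
  have hDGnot : ∀ A ∈ DG, A ∉ 𝒜 := by
    intro A hA hA𝒜
    rw [hDG, Finset.mem_filter] at hA
    have := h𝒜.2.1 A hA𝒜 _ hIcc2
    rw [hA.2.2.1] at this
    exact Finset.not_nonempty_empty this
  have hDGcard : (n - r - 2).choose (r-2) ≤ DG.card := by
    have hG : ((Finset.Icc (r+2) n).erase m).card = n - r - 2 := by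
      rw [Finset.card_erase_of_mem (by rw [Finset.mem_Icc]; omega), Nat.card_Icc]
      omega
    rw [← hG]
    apply choose_le_card_of_insert2 (a := 1) (b := m)
    · rw [Finset.mem_erase, Finset.mem_Icc]; omega
    · exact Finset.notMem_erase m _
    · omega
    · intro T hT
      rw [Finset.mem_powersetCard] at hT
      obtain ⟨hTsub, hTcard⟩ := hT
      have hTge : ∀ a ∈ T, r + 2 ≤ a ∧ a ≤ n ∧ a ≠ m := by
        intro a ha
        have := hTsub ha
        rw [Finset.mem_erase, Finset.mem_Icc] at this
        exact ⟨this.2.1, this.2.2, this.1⟩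
      have hmT : m ∉ T := fun h => (hTge m h).2.2 rfl
      have h1T : (1:ℕ) ∉ insert m T := by
        rw [Finset.mem_insert]
        push_neg
        exact ⟨by omega, fun h => by have := (hTge 1 h).1; omega⟩
      rw [hDG, Finset.mem_filter]
      refine ⟨?_, Finset.mem_insert_self _ _, ?_, ?_⟩
      · rw [mem_chooseFam]
        constructor
        · intro a ha
          rw [Finset.mem_insert, Finset.mem_insert] at ha
          rw [Finset.mem_Icc]
          rcases ha with rfl | rfl | h
          · omega
          · omega
          · have := hTge a h; omega
        · rw [Finset.card_insert_of_notMem h1T, Finset.card_insert_of_notMem hmT, hTcard]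
          omega
      · rw [Finset.eq_empty_iff_forall_notMem]
        intro a ha
        rw [Finset.mem_inter, Finset.mem_insert, Finset.mem_insert, Finset.mem_Icc] at ha
        rcases ha.1 with rfl | rfl | h
        · omega
        · omega
        · have := hTge a h; omega
      · refine ⟨m, Finset.mem_inter.mpr ⟨Finset.mem_insert_of_mem (Finset.mem_insert_self _ _), hmX⟩⟩
  -- master inequality for the small-count cases
  have hmaster : ((r+1).choose 3 + r) * n.choose (r-3) < (n - r - 2).choose (r-2) := by
    have := master_binom (K := (r+1).choose 3 + r) (c := r+2) (k := r-3) (n := n) hbig1 hbig2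
    have e1 : n - (r+2) = n - r - 2 := by omega
    have e2 : (r-3)+1 = r - 2 := by omega
    rwa [e1, e2] at this
  by_cases hc1 : ∃ A ∈ 𝒜, 1 ∉ A ∧ (2 ∉ A ∨ 3 ∉ A)
  · -- case C1 : window bound
    obtain ⟨Aw, hAw, hAw1, hAw23⟩ := hc1
    have hwin : ∀ C ∈ 𝒜, 1 ∉ C → 3 ≤ (C ∩ Finset.Icc 2 (r+2)).card := by
      intro C hC hC1
      exact window3 h𝒜 hr (by omega) hAw hAw1 hAw23 hC hC1
    -- injective encoding of Wh
    have hWhbound : Wh.card ≤ (r+1).choose 3 * n.choose (r-3) := by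
      classical
      set target := ((Finset.Icc 2 (r+2)).powersetCard 3) ×ˢ ((Finset.Icc 1 n).powersetCard (r-3))
        with htarget
      have htcard : target.card = (r+1).choose 3 * n.choose (r-3) := by
        rw [htarget, Finset.card_product, Finset.card_powersetCard, Finset.card_powersetCard,
            Nat.card_Icc, Nat.card_Icc]
        congr 2 <;> omega
      rw [← htcard]
      set fσ : Finset ℕ → Finset ℕ := fun C =>
        if h : 3 ≤ (C ∩ Finset.Icc 2 (r+2)).card
        then (Finset.exists_subset_card_eq h).choose else ∅ with hfσ
      have hfσ_spec : ∀ C : Finset ℕ, 3 ≤ (C ∩ Finset.Icc 2 (r+2)).card →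
          fσ C ⊆ C ∩ Finset.Icc 2 (r+2) ∧ (fσ C).card = 3 := by
        intro C h
        rw [hfσ]
        simp only [dif_pos h]
        obtain ⟨h1, h2⟩ := (Finset.exists_subset_card_eq h).choose_spec
        exact ⟨h1, h2⟩
      apply Finset.card_le_card_of_injOn (fun C => (fσ C, C \ fσ C))
      · intro C hC
        obtain ⟨hC𝒜, hChit, hC1⟩ := hWhmem C hC
        have h3 := hwin C hC𝒜 hC1
        obtain ⟨hsub, hcard3⟩ := hfσ_spec C h3
        have hsubC : fσ C ⊆ C := fun a ha => (Finset.mem_inter.mp (hsub ha)).1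
        rw [htarget, Finset.mem_coe, Finset.mem_product]
        constructor
        · rw [Finset.mem_powersetCard]
          exact ⟨fun a ha => (Finset.mem_inter.mp (hsub ha)).2, hcard3⟩
        · rw [Finset.mem_powersetCard]
          constructor
          · intro a ha
            exact (mem_chooseFam.mp (h𝒜.1 hC𝒜)).1 (Finset.mem_sdiff.mp ha).1
          · rw [Finset.card_sdiff_of_subset hsubC, hcard3, card_of_mem (h𝒜.1 hC𝒜)]
      · intro C₁ h₁ C₂ h₂ heq
        dsimp only at heq
        have hk : ∀ C : Finset ℕ, C ∈ Wh → fσ C ∪ (C \ fσ C) = C := by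
          intro C hC
          obtain ⟨hC𝒜, _, hC1⟩ := hWhmem C hC
          have h3 := hwin C hC𝒜 hC1
          obtain ⟨hsub, _⟩ := hfσ_spec C h3
          exact Finset.union_sdiff_of_subset (fun a ha => (Finset.mem_inter.mp (hsub ha)).1)
        rw [Prod.mk.injEq] at heq
        have e1 := hk C₁ h₁
        have e2 := hk C₂ h₂
        rw [heq.2, heq.1] at e1
        exact e1.symm.trans e2
    apply hfin DG hDGSH hDGnot
    calc Wh.card ≤ (r+1).choose 3 * n.choose (r-3) := hWhbound
      _ ≤ ((r+1).choose 3 + r) * n.choose (r-3) := Nat.mul_le_mul_right _ (by omega)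
      _ < (n - r - 2).choose (r-2) := hmaster
      _ ≤ DG.card := hDGcard
  · -- every 1-free member contains 2 and 3
    push_neg at hc1
    have hW23 : ∀ C ∈ 𝒜, 1 ∉ C → 2 ∈ C ∧ 3 ∈ C := by
      intro C hC hC1
      rcases hc1 C hC hC1 with ⟨h2, h3⟩
      exact ⟨h2, h3⟩
    by_cases hc2 : ∃ A' ∈ 𝒜, 1 ∈ A' ∧ 2 ∉ A' ∧ 3 ∉ A'
    · -- case C2a
      obtain ⟨A₀, hA₀, hA₀1, hA₀2, hA₀3⟩ := hc2
      set U₀ := A₀.erase 1 with hU₀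
      have hU₀card : U₀.card = r - 1 := by
        rw [hU₀, Finset.card_erase_of_mem hA₀1, card_of_mem (h𝒜.1 hA₀)]
      have hWhsub : Wh ⊆ U₀.biUnion (fun u => (chooseFam n r).filter
          (fun C => 2 ∈ C ∧ 3 ∈ C ∧ u ∈ C ∧ 1 ∉ C)) := by
        intro C hC
        obtain ⟨hC𝒜, hChit, hC1⟩ := hWhmem C hC
        obtain ⟨h2C, h3C⟩ := hW23 C hC𝒜 hC1
        obtain ⟨x, hx⟩ := h𝒜.2.1 C hC𝒜 A₀ hA₀
        rw [Finset.mem_inter] at hx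
        have hx1 : x ≠ 1 := fun h => hC1 (h ▸ hx.1)
        rw [Finset.mem_biUnion]
        refine ⟨x, Finset.mem_erase.mpr ⟨hx1, hx.2⟩, ?_⟩
        rw [Finset.mem_filter]
        exact ⟨h𝒜.1 hC𝒜, h2C, h3C, hx.1, hC1⟩
      have hWhbound : Wh.card ≤ (r-1) * n.choose (r-3) := by
        calc Wh.card ≤ _ := Finset.card_le_card hWhsub
          _ ≤ ∑ u ∈ U₀, ((chooseFam n r).filter
              (fun C => 2 ∈ C ∧ 3 ∈ C ∧ u ∈ C ∧ 1 ∉ C)).card := Finset.card_biUnion_le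
          _ ≤ ∑ u ∈ U₀, n.choose (r-3) := by
              apply Finset.sum_le_sum
              intro u hu
              rw [hU₀, Finset.mem_erase] at hu
              have hu2 : u ≠ 2 := fun h => hA₀2 (h ▸ hu.2)
              have hu3 : u ≠ 3 := fun h => hA₀3 (h ▸ hu.2)
              have hmemb : ∀ A ∈ (chooseFam n r).filter
                  (fun C => 2 ∈ C ∧ 3 ∈ C ∧ u ∈ C ∧ 1 ∉ C),
                  2 ∈ A ∧ 3 ∈ A ∧ u ∈ A ∧
                    ((A.erase 2).erase 3).erase u ∈ (Finset.Icc 1 n).powersetCard (r-3) := by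
                intro A hA
                rw [Finset.mem_filter] at hA
                obtain ⟨hAc, h2A, h3A, huA, h1A⟩ := hA
                refine ⟨h2A, h3A, huA, ?_⟩
                rw [Finset.mem_powersetCard]
                constructor
                · intro a ha
                  have h' := (Finset.mem_erase.mp ha).2
                  have h'' := (Finset.mem_erase.mp h').2
                  have h''' := (Finset.mem_erase.mp h'').2
                  exact (mem_chooseFam.mp hAc).1 h'''
                · rw [Finset.card_erase_of_mem, Finset.card_erase_of_mem,
                      Finset.card_erase_of_mem h2A, card_of_mem hAc]
                  · omega
                  · rw [Finset.mem_erase]; exact ⟨Ne.symm (by omega), h3A⟩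
                  · rw [Finset.mem_erase, Finset.mem_erase]
                    exact ⟨hu3, hu2, huA⟩
              have hfin3 := card_le_choose_of_erase3 (G := Finset.Icc 1 n) (a := 2) (b := 3)
                (c := u) (k := r-3) (show (2:ℕ) ≠ 3 by omega) (show (2:ℕ) ≠ u from Ne.symm hu2)
                (show (3:ℕ) ≠ u from Ne.symm hu3) hmemb
              rwa [Nat.card_Icc, show n + 1 - 1 = n by omega] at hfin3
          _ = (r-1) * n.choose (r-3) := by rw [Finset.sum_const, hU₀card, smul_eq_mul]
      apply hfin DG hDGSH hDGnot
      calc Wh.card ≤ (r-1) * n.choose (r-3) := hWhbound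
        _ ≤ ((r+1).choose 3 + r) * n.choose (r-3) := Nat.mul_le_mul_right _ (by omega)
        _ < (n - r - 2).choose (r-2) := hmaster
        _ ≤ DG.card := hDGcard
    · -- case C2b
      push_neg at hc2
      have hB123 : ∀ A ∈ 𝒜, 1 ∈ A → (2 ∈ A ∨ 3 ∈ A) := by
        intro A hA h1
        by_contra hcon
        push_neg at hcon
        exact hcon.2 (hc2 A hA h1 hcon.1)
      set Φ := (chooseFam n r).filter
          (fun A => 1 ∈ A ∧ 2 ∉ A ∧ 3 ∉ A ∧ (A ∩ X).Nonempty) with hΦ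
      have hΦSH : Φ ⊆ SH := by
        intro A hA
        rw [hΦ, Finset.mem_filter] at hA
        rw [hSH, Finset.mem_filter, starFam, Finset.mem_filter]
        exact ⟨⟨hA.1, hA.2.1⟩, hA.2.2.2.2⟩
      have hΦnot : ∀ A ∈ Φ, A ∉ 𝒜 := by
        intro A hA hA𝒜
        rw [hΦ, Finset.mem_filter] at hA
        rcases hB123 A hA𝒜 hA.2.1 with h | h
        · exact hA.2.2.1 h
        · exact hA.2.2.2.1 h
      set ρset := (chooseFam n r).filter
          (fun A => 2 ∈ A ∧ 3 ∈ A ∧ 1 ∉ A ∧ (A ∩ X).Nonempty) with hρset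
      have hWhρ : Wh ⊆ ρset := by
        intro C hC
        obtain ⟨hC𝒜, hChit, hC1⟩ := hWhmem C hC
        obtain ⟨h2C, h3C⟩ := hW23 C hC𝒜 hC1
        rw [hρset, Finset.mem_filter]
        exact ⟨h𝒜.1 hC𝒜, h2C, h3C, hC1, hChit⟩
      -- lower bound for Φ via the m-class (always available)
      have hΦm : (n-4).choose (r-2) ≤ (Φ.filter (fun A => m ∈ A)).card := by
        have hG : ((Finset.Icc 4 n).erase m).card = n - 4 := by
          rw [Finset.card_erase_of_mem (by rw [Finset.mem_Icc]; omega), Nat.card_Icc]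
          omega
        rw [← hG]
        apply choose_le_card_of_insert2 (a := 1) (b := m)
        · rw [Finset.mem_erase, Finset.mem_Icc]; omega
        · exact Finset.notMem_erase m _
        · omega
        · intro T hT
          rw [Finset.mem_powersetCard] at hT
          obtain ⟨hTsub, hTcard⟩ := hT
          have hTge : ∀ a ∈ T, 4 ≤ a ∧ a ≤ n ∧ a ≠ m := by
            intro a ha
            have := hTsub ha
            rw [Finset.mem_erase, Finset.mem_Icc] at this
            exact ⟨this.2.1, this.2.2, this.1⟩
          have hmT : m ∉ T := fun h => (hTge m h).2.2 rfl
          have h1T : (1:ℕ) ∉ insert m T := by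
            rw [Finset.mem_insert]
            push_neg
            exact ⟨by omega, fun h => by have := (hTge 1 h).1; omega⟩
          rw [Finset.mem_filter, hΦ, Finset.mem_filter]
          have hmemA : ∀ a ∈ insert 1 (insert m T), 1 ≤ a ∧ a ≤ n := by
            intro a ha
            rw [Finset.mem_insert, Finset.mem_insert] at ha
            rcases ha with rfl | rfl | h
            · omega
            · omega
            · have := hTge a h; omega
          have hnot23 : ∀ b : ℕ, 4 ≤ b → b ∉ insert 1 (insert m T) → True := fun _ _ _ => trivial
          refine ⟨⟨?_, ?_, ?_, ?_, ?_⟩, Finset.mem_insert_of_mem (Finset.mem_insert_self _ _)⟩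
          · rw [mem_chooseFam]
            constructor
            · intro a ha
              rw [Finset.mem_Icc]
              exact hmemA a ha
            · rw [Finset.card_insert_of_notMem h1T, Finset.card_insert_of_notMem hmT, hTcard]
              omega
          · exact Finset.mem_insert_self _ _
          · intro hcon
            rw [Finset.mem_insert, Finset.mem_insert] at hcon
            rcases hcon with h | h | h
            · omega
            · omega
            · have := hTge 2 h; omega
          · intro hcon
            rw [Finset.mem_insert, Finset.mem_insert] at hcon
            rcases hcon with h | h | h
            · omega
            · omega
            · have := hTge 3 h; omega
          · exact ⟨m, Finset.mem_inter.mpr ⟨Finset.mem_insert_of_mem (Finset.mem_insert_self _ _), hmX⟩⟩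
      have hΦm' : (n-4).choose (r-2) ≤ Φ.card :=
        le_trans hΦm (Finset.card_le_card (Finset.filter_subset _ _))
      -- now show ρset.card < Φ.card  (or reach a contradiction with optimality)
      have hkey : ρset.card < Φ.card := by
        by_cases hx23 : 2 ∈ X ∨ 3 ∈ X
        · -- upper bound for ρset
          have hρub : ρset.card ≤ (n-3).choose (r-2) := by
            have hG : (Finset.Icc 4 n).card = n - 3 := by rw [Nat.card_Icc]; omega
            rw [← hG]
            apply card_le_choose_of_erase2 (a := 2) (b := 3) (by omega)
            intro A hA
            rw [hρset, Finset.mem_filter] at hA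
            obtain ⟨hAc, h2A, h3A, h1A, _⟩ := hA
            refine ⟨h2A, h3A, ?_⟩
            rw [Finset.mem_powersetCard]
            constructor
            · intro a ha
              rw [Finset.mem_erase] at ha
              obtain ⟨ha3, ha'⟩ := ha
              rw [Finset.mem_erase] at ha'
              obtain ⟨ha2, haA⟩ := ha'
              have h1a := mem_ge_one hAc haA
              have hna := mem_le_n hAc haA
              have : a ≠ 1 := fun h => h1A (h ▸ haA)
              rw [Finset.mem_Icc]
              omega
            · rw [Finset.card_erase_of_mem, Finset.card_erase_of_mem h2A, card_of_mem hAc]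
              · omega
              · rw [Finset.mem_erase]; exact ⟨by omega, h3A⟩
          by_cases hy : ∃ y ∈ X, 4 ≤ y ∧ y ≠ m
          · -- second class of Φ
            obtain ⟨y, hyX, hy4, hym⟩ := hy
            have hyn : y ≤ n := (Finset.mem_Icc.mp (hXsub hyX)).2
            have hΦy : (n-5).choose (r-2) ≤ (Φ.filter (fun A => m ∉ A)).card := by
              have hG : (((Finset.Icc 4 n).erase m).erase y).card = n - 5 := by
                rw [Finset.card_erase_of_mem, Finset.card_erase_of_mem, Nat.card_Icc]
                · omega
                · rw [Finset.mem_Icc]; omega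
                · rw [Finset.mem_erase, Finset.mem_Icc]
                  exact ⟨hym, by omega, hyn⟩
              rw [← hG]
              apply choose_le_card_of_insert2 (a := 1) (b := y)
              · rw [Finset.mem_erase, Finset.mem_erase, Finset.mem_Icc]; omega
              · exact Finset.notMem_erase y _
              · omega
              · intro T hT
                rw [Finset.mem_powersetCard] at hT
                obtain ⟨hTsub, hTcard⟩ := hT
                have hTge : ∀ a ∈ T, 4 ≤ a ∧ a ≤ n ∧ a ≠ m ∧ a ≠ y := by
                  intro a ha
                  have := hTsub ha
                  rw [Finset.mem_erase, Finset.mem_erase, Finset.mem_Icc] at this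
                  exact ⟨this.2.2.1, this.2.2.2, this.2.1, this.1⟩
                have hyT : y ∉ T := fun h => (hTge y h).2.2.2 rfl
                have h1T : (1:ℕ) ∉ insert y T := by
                  rw [Finset.mem_insert]
                  push_neg
                  exact ⟨by omega, fun h => by have := (hTge 1 h).1; omega⟩
                rw [Finset.mem_filter, hΦ, Finset.mem_filter]
                refine ⟨⟨?_, Finset.mem_insert_self _ _, ?_, ?_, ?_⟩, ?_⟩
                · rw [mem_chooseFam]
                  constructor
                  · intro a ha
                    rw [Finset.mem_insert, Finset.mem_insert] at ha
                    rw [Finset.mem_Icc]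
                    rcases ha with rfl | rfl | h
                    · omega
                    · omega
                    · have := hTge a h; omega
                  · rw [Finset.card_insert_of_notMem h1T, Finset.card_insert_of_notMem hyT,
                        hTcard]
                    omega
                · intro hcon
                  rw [Finset.mem_insert, Finset.mem_insert] at hcon
                  rcases hcon with h | h | h
                  · omega
                  · omega
                  · have := hTge 2 h; omega
                · intro hcon
                  rw [Finset.mem_insert, Finset.mem_insert] at hcon
                  rcases hcon with h | h | h
                  · omega
                  · omega
                  · have := hTge 3 h; omega
                · exact ⟨y, Finset.mem_inter.mpr
                    ⟨Finset.mem_insert_of_mem (Finset.mem_insert_self _ _), hyX⟩⟩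
                · rw [Finset.mem_insert, Finset.mem_insert]
                  push_neg
                  refine ⟨by omega, Ne.symm hym, fun h => (hTge m h).2.2.1 rfl⟩
            have hΦsplit : (Φ.filter (fun A => m ∈ A)).card + (Φ.filter (fun A => ¬ m ∈ A)).card
                = Φ.card := Finset.card_filter_add_card_filter_not _
            have hpascal : (n-3).choose (r-2) = (n-4).choose (r-3) + (n-4).choose (r-2) := by
              have e1 : n - 3 = (n-4) + 1 := by omega
              have e2 : r - 2 = (r-3) + 1 := by omega
              rw [e1, e2, Nat.choose_succ_succ]
            have hstrict : (n-4).choose (r-3) < (n-5).choose (r-2) := by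
              have := master_binom (K := 1) (c := 1) (k := r-3) (n := n-4) hbig3 hbig4
              have e1 : n - 4 - 1 = n - 5 := by omega
              have e2 : (r-3)+1 = r-2 := by omega
              rw [e1, e2, one_mul] at this
              exact this
            omega
          · -- the F₂ beater yields a contradiction with optimality of the star
            exfalso
            push_neg at hy
            -- every element of X other than 2,3 equals m
            have hXstruct : ∀ x ∈ X, x = 2 ∨ x = 3 ∨ x = m := by
              intro x hx
              have h2 := hxge x hx
              by_cases h4 : 4 ≤ x
              · right; right; exact hy x hx h4
              · interval_cases x
                · left; rfl
                · right; left; rfl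
            -- Φ ⊆ sets containing 1 and m avoiding 2,3
            have hΦub : Φ.card ≤ (n-4).choose (r-2) := by
              have hG : ((Finset.Icc 4 n).erase m).card = n - 4 := by
                rw [Finset.card_erase_of_mem (by rw [Finset.mem_Icc]; omega), Nat.card_Icc]
                omega
              rw [← hG]
              apply card_le_choose_of_erase2 (a := 1) (b := m) (by omega)
              intro A hA
              rw [hΦ, Finset.mem_filter] at hA
              obtain ⟨hAc, h1A, h2A, h3A, x, hx⟩ := hA
              rw [Finset.mem_inter] at hx
              have hxm : x = m := by
                rcases hXstruct x hx.2 with rfl | rfl | rfl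
                · exact absurd hx.1 h2A
                · exact absurd hx.1 h3A
                · rfl
              subst hxm
              refine ⟨h1A, hx.1, ?_⟩
              rw [Finset.mem_powersetCard]
              constructor
              · intro a ha
                rw [Finset.mem_erase] at ha
                obtain ⟨ham, ha'⟩ := ha
                rw [Finset.mem_erase] at ha'
                obtain ⟨ha1, haA⟩ := ha'
                have h1a := mem_ge_one hAc haA
                have hna := mem_le_n hAc haA
                have hne2 : a ≠ 2 := fun h => h2A (h ▸ haA)
                have hne3 : a ≠ 3 := fun h => h3A (h ▸ haA)
                rw [Finset.mem_erase, Finset.mem_Icc]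
                exact ⟨ham, by omega, hna⟩
              · rw [Finset.card_erase_of_mem, Finset.card_erase_of_mem h1A, card_of_mem hAc]
                · omega
                · rw [Finset.mem_erase]; exact ⟨Ne.symm (by omega), hx.1⟩
            -- ρset has at least C(n-3, r-2) members
            have hρlb : (n-3).choose (r-2) ≤ ρset.card := by
              have hG : ((Finset.Icc 4 n) : Finset ℕ).card = n - 3 := by
                rw [Nat.card_Icc]; omega
              rw [← hG]
              apply choose_le_card_of_insert2 (a := 2) (b := 3)
              · rw [Finset.mem_Icc]; omega
              · rw [Finset.mem_Icc]; omega
              · omega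
              · intro T hT
                rw [Finset.mem_powersetCard] at hT
                obtain ⟨hTsub, hTcard⟩ := hT
                have hTge : ∀ a ∈ T, 4 ≤ a ∧ a ≤ n := by
                  intro a ha
                  have := hTsub ha
                  rw [Finset.mem_Icc] at this
                  exact this
                have h3T : (3:ℕ) ∉ T := fun h => by have := hTge 3 h; omega
                have h2T : (2:ℕ) ∉ insert 3 T := by
                  rw [Finset.mem_insert]
                  push_neg
                  exact ⟨by omega, fun h => by have := hTge 2 h; omega⟩
                rw [hρset, Finset.mem_filter]
                refine ⟨?_, Finset.mem_insert_self _ _,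
                  Finset.mem_insert_of_mem (Finset.mem_insert_self _ _), ?_, ?_⟩
                · rw [mem_chooseFam]
                  constructor
                  · intro a ha
                    rw [Finset.mem_insert, Finset.mem_insert] at ha
                    rw [Finset.mem_Icc]
                    rcases ha with rfl | rfl | h
                    · omega
                    · omega
                    · have := hTge a h; omega
                  · rw [Finset.card_insert_of_notMem h2T, Finset.card_insert_of_notMem h3T,
                        hTcard]
                    omega
                · intro hcon
                  rw [Finset.mem_insert, Finset.mem_insert] at hcon
                  rcases hcon with h | h | h
                  · omega
                  · omega
                  · have := hTge 1 h; omega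
                · rcases hx23 with h2 | h3
                  · exact ⟨2, Finset.mem_inter.mpr ⟨Finset.mem_insert_self _ _, h2⟩⟩
                  · exact ⟨3, Finset.mem_inter.mpr
                      ⟨Finset.mem_insert_of_mem (Finset.mem_insert_self _ _), h3⟩⟩
            -- F₂ beats the star
            have hbeat : hit X (starFam n r) < hit X (F2fam n r) := by
              apply beater (q := fun A => 2 ∈ A ∨ 3 ∈ A) (ρ := ρset)
              · intro A hA h1 hhit hq
                rw [F2fam, Finset.mem_filter]
                refine ⟨hA, ?_⟩
                have hpair : ∀ x, x ∈ A → x = 2 ∨ x = 3 →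
                    ({1, x} : Finset ℕ) ⊆ A ∩ Finset.Icc 1 3 := by
                  intro x hx hx3
                  intro a ha
                  rw [Finset.mem_insert, Finset.mem_singleton] at ha
                  rw [Finset.mem_inter, Finset.mem_Icc]
                  rcases ha with rfl | rfl
                  · exact ⟨h1, by omega⟩
                  · rcases hx3 with rfl | rfl <;> exact ⟨hx, by omega⟩
                rcases hq with h2 | h3
                · have := Finset.card_le_card (hpair 2 h2 (Or.inl rfl))
                  rw [Finset.card_pair (by omega)] at this
                  omega
                · have := Finset.card_le_card (hpair 3 h3 (Or.inr rfl))
                  rw [Finset.card_pair (by omega)] at this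
                  omega
              · intro A hA
                rw [hρset, Finset.mem_filter] at hA
                obtain ⟨hAc, h2A, h3A, h1A, hhit⟩ := hA
                refine ⟨?_, hhit, h1A⟩
                rw [F2fam, Finset.mem_filter]
                refine ⟨hAc, ?_⟩
                have : ({2, 3} : Finset ℕ) ⊆ A ∩ Finset.Icc 1 3 := by
                  intro a ha
                  rw [Finset.mem_insert, Finset.mem_singleton] at ha
                  rw [Finset.mem_inter, Finset.mem_Icc]
                  rcases ha with rfl | rfl <;> exact ⟨by assumption, by omega⟩
                have := Finset.card_le_card this
                rw [Finset.card_pair (by omega)] at this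
                omega
              · -- the deficiency filter is exactly Φ
                have hEq : (chooseFam n r).filter
                    (fun A => (1 ∈ A ∧ (A ∩ X).Nonempty) ∧ ¬ (2 ∈ A ∨ 3 ∈ A)) = Φ := by
                  rw [hΦ]
                  apply Finset.filter_congr
                  intro A _
                  constructor
                  · rintro ⟨⟨h1, hh⟩, hq⟩
                    push_neg at hq
                    exact ⟨h1, hq.1, hq.2, hh⟩
                  · rintro ⟨h1, h2, h3, hh⟩
                    exact ⟨⟨h1, hh⟩, by push_neg; exact ⟨h2, h3⟩⟩
                rw [hEq]
                have hstrict : (n-4).choose (r-2) < (n-3).choose (r-2) := by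
                  have hpascal : (n-3).choose (r-2) = (n-4).choose (r-3) + (n-4).choose (r-2) := by
                    have e1 : n - 3 = (n-4) + 1 := by omega
                    have e2 : r - 2 = (r-3) + 1 := by omega
                    rw [e1, e2, Nat.choose_succ_succ]
                  have hpos : 0 < (n-4).choose (r-3) := Nat.choose_pos (by omega)
                  omega
                omega
            have := hit_le_star hopt (F2_lcif (by omega))
            omega
        · -- 2 ∉ X and 3 ∉ X : double counting
          push_neg at hx23
          obtain ⟨h2X, h3X⟩ := hx23
          set G4 := Finset.Icc 4 n with hG4
          have hG4card : G4.card = n - 3 := by rw [hG4, Nat.card_Icc]; omega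
          set S2 := (G4.powersetCard (r-2)).filter (fun T => (T ∩ X).Nonempty) with hS2
          set S1 := (G4.powersetCard (r-1)).filter (fun T => (T ∩ X).Nonempty) with hS1
          -- ρset ≃ S2
          have hρS2 : ρset.card = S2.card := by
            apply Finset.card_nbij' (fun A => (A.erase 2).erase 3)
                (fun T => insert 2 (insert 3 T))
            · intro A hA
              simp only [Finset.mem_coe] at hA ⊢
              rw [hρset, Finset.mem_filter] at hA
              obtain ⟨hAc, h2A, h3A, h1A, hhit⟩ := hA
              rw [hS2, Finset.mem_filter]
              constructor
              · rw [Finset.mem_powersetCard]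
                constructor
                · intro a ha
                  rw [Finset.mem_erase] at ha
                  obtain ⟨ha3, ha'⟩ := ha
                  rw [Finset.mem_erase] at ha'
                  obtain ⟨ha2, haA⟩ := ha'
                  have h1a := mem_ge_one hAc haA
                  have hna := mem_le_n hAc haA
                  have : a ≠ 1 := fun h => h1A (h ▸ haA)
                  rw [hG4, Finset.mem_Icc]
                  omega
                · rw [Finset.card_erase_of_mem, Finset.card_erase_of_mem h2A, card_of_mem hAc]
                  · omega
                  · rw [Finset.mem_erase]; exact ⟨by omega, h3A⟩
              · obtain ⟨x, hx⟩ := hhit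
                rw [Finset.mem_inter] at hx
                have hx2 : x ≠ 2 := fun h => h2X (h ▸ hx.2)
                have hx3 : x ≠ 3 := fun h => h3X (h ▸ hx.2)
                refine ⟨x, Finset.mem_inter.mpr ⟨?_, hx.2⟩⟩
                rw [Finset.mem_erase, Finset.mem_erase]
                exact ⟨hx3, hx2, hx.1⟩
            · intro T hT
              simp only [Finset.mem_coe] at hT ⊢
              rw [hS2, Finset.mem_filter, Finset.mem_powersetCard] at hT
              obtain ⟨⟨hTsub, hTcard⟩, hThit⟩ := hT
              have hTge : ∀ a ∈ T, 4 ≤ a ∧ a ≤ n := by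
                intro a ha
                have := hTsub ha
                rw [hG4, Finset.mem_Icc] at this
                exact this
              have h3T : (3:ℕ) ∉ T := fun h => by have := hTge 3 h; omega
              have h2T : (2:ℕ) ∉ insert 3 T := by
                rw [Finset.mem_insert]
                push_neg
                exact ⟨by omega, fun h => by have := hTge 2 h; omega⟩
              rw [hρset, Finset.mem_filter]
              refine ⟨?_, Finset.mem_insert_self _ _,
                Finset.mem_insert_of_mem (Finset.mem_insert_self _ _), ?_, ?_⟩
              · rw [mem_chooseFam]
                constructor
                · intro a ha
                  rw [Finset.mem_insert, Finset.mem_insert] at ha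
                  rw [Finset.mem_Icc]
                  rcases ha with rfl | rfl | h
                  · omega
                  · omega
                  · have := hTge a h; omega
                · rw [Finset.card_insert_of_notMem h2T, Finset.card_insert_of_notMem h3T,
                      hTcard]
                  omega
              · intro hcon
                rw [Finset.mem_insert, Finset.mem_insert] at hcon
                rcases hcon with h | h | h
                · omega
                · omega
                · have := hTge 1 h; omega
              · obtain ⟨x, hx⟩ := hThit
                rw [Finset.mem_inter] at hx
                exact ⟨x, Finset.mem_inter.mpr
                  ⟨Finset.mem_insert_of_mem (Finset.mem_insert_of_mem hx.1), hx.2⟩⟩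
            · intro A hA
              simp only [Finset.mem_coe] at hA ⊢
              rw [hρset, Finset.mem_filter] at hA
              obtain ⟨hAc, h2A, h3A, h1A, hhit⟩ := hA
              rw [Finset.insert_erase (Finset.mem_erase.mpr ⟨by omega, h3A⟩),
                  Finset.insert_erase h2A]
            · intro T hT
              simp only [Finset.mem_coe] at hT ⊢
              rw [hS2, Finset.mem_filter, Finset.mem_powersetCard] at hT
              obtain ⟨⟨hTsub, hTcard⟩, hThit⟩ := hT
              have hTge : ∀ a ∈ T, 4 ≤ a := by
                intro a ha
                have := hTsub ha
                rw [hG4, Finset.mem_Icc] at this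
                omega
              have h3T : (3:ℕ) ∉ T := fun h => by have := hTge 3 h; omega
              have h2T : (2:ℕ) ∉ insert 3 T := by
                rw [Finset.mem_insert]
                push_neg
                exact ⟨by omega, fun h => by have := hTge 2 h; omega⟩
              rw [Finset.erase_insert h2T, Finset.erase_insert h3T]
          -- Φ ≃ S1
          have hΦS1 : Φ.card = S1.card := by
            apply Finset.card_nbij' (fun A => A.erase 1) (fun T => insert 1 T)
            · intro A hA
              simp only [Finset.mem_coe] at hA ⊢
              rw [hΦ, Finset.mem_filter] at hA
              obtain ⟨hAc, h1A, h2A, h3A, hhit⟩ := hA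
              rw [hS1, Finset.mem_filter]
              constructor
              · rw [Finset.mem_powersetCard]
                constructor
                · intro a ha
                  rw [Finset.mem_erase] at ha
                  obtain ⟨ha1, haA⟩ := ha
                  have h1a := mem_ge_one hAc haA
                  have hna := mem_le_n hAc haA
                  have hne2 : a ≠ 2 := fun h => h2A (h ▸ haA)
                  have hne3 : a ≠ 3 := fun h => h3A (h ▸ haA)
                  rw [hG4, Finset.mem_Icc]
                  omega
                · rw [Finset.card_erase_of_mem h1A, card_of_mem hAc]
              · obtain ⟨x, hx⟩ := hhit
                rw [Finset.mem_inter] at hx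
                have hx1 : x ≠ 1 := by
                  intro h
                  have := hxge x hx.2
                  omega
                exact ⟨x, Finset.mem_inter.mpr ⟨Finset.mem_erase.mpr ⟨hx1, hx.1⟩, hx.2⟩⟩
            · intro T hT
              simp only [Finset.mem_coe] at hT ⊢
              rw [hS1, Finset.mem_filter, Finset.mem_powersetCard] at hT
              obtain ⟨⟨hTsub, hTcard⟩, hThit⟩ := hT
              have hTge : ∀ a ∈ T, 4 ≤ a ∧ a ≤ n := by
                intro a ha
                have := hTsub ha
                rw [hG4, Finset.mem_Icc] at this
                exact this
              have h1T : (1:ℕ) ∉ T := fun h => by have := hTge 1 h; omega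
              rw [hΦ, Finset.mem_filter]
              refine ⟨?_, Finset.mem_insert_self _ _, ?_, ?_, ?_⟩
              · rw [mem_chooseFam]
                constructor
                · intro a ha
                  rw [Finset.mem_insert] at ha
                  rw [Finset.mem_Icc]
                  rcases ha with rfl | h
                  · omega
                  · have := hTge a h; omega
                · rw [Finset.card_insert_of_notMem h1T, hTcard]
                  omega
              · intro hcon
                rw [Finset.mem_insert] at hcon
                rcases hcon with h | h
                · omega
                · have := hTge 2 h; omega
              · intro hcon
                rw [Finset.mem_insert] at hcon
                rcases hcon with h | h
                · omega
                · have := hTge 3 h; omega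
              · obtain ⟨x, hx⟩ := hThit
                rw [Finset.mem_inter] at hx
                exact ⟨x, Finset.mem_inter.mpr ⟨Finset.mem_insert_of_mem hx.1, hx.2⟩⟩
            · intro A hA
              simp only [Finset.mem_coe] at hA ⊢
              rw [hΦ, Finset.mem_filter] at hA
              exact Finset.insert_erase hA.2.1
            · intro T hT
              simp only [Finset.mem_coe] at hT ⊢
              rw [hS1, Finset.mem_filter, Finset.mem_powersetCard] at hT
              have h1T : (1:ℕ) ∉ T := by
                intro h
                have := hT.1.1 h
                rw [hG4, Finset.mem_Icc] at this
                omega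
              exact Finset.erase_insert h1T
          -- apply the growth inequality
          rw [hρS2, hΦS1]
          rcases Nat.eq_zero_or_pos S2.card with hz | hpos
          · rw [hz]
            rw [hΦS1] at hΦm'
            have : 0 < (n-4).choose (r-2) := Nat.choose_pos (by omega)
            omega
          · have hgr := hgrow (X := X) (G := G4) (k := r-2)
            have e1 : r - 2 + 1 = r - 1 := by omega
            rw [e1, ← hS2, ← hS1, hG4card] at hgr
            by_contra hcon
            push_neg at hcon
            have h1 : S2.card * (n - 3 - (r-2)) ≤ S2.card * (r - 1) :=
              le_trans hgr (Nat.mul_le_mul_right _ hcon)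
            have h2 := Nat.le_of_mul_le_mul_left h1 hpos
            omega
      exact hfin Φ hΦSH hΦnot (lt_of_le_of_lt (Finset.card_le_card hWhρ) hkey)

end BB

namespace BB
open BBtool

variable {n r : ℕ} {X : Finset ℕ}

lemma sizes {r n : ℕ} (hr : 3 ≤ r) (hn : 2^(5*r+5) ≤ n) :
    2*((r+2)+(r-3)) + 2 ≤ n ∧ ((r+1).choose 3 + r)*((r-3)+1)*2^((r-3)+1) < n ∧
    2*(1+(r-3))+2 ≤ n-4 ∧ 1*((r-3)+1)*2^((r-3)+1) < n-4 ∧ 4*r+8 ≤ n ∧ r+4 ≤ n := by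
  have hq1 : r + 1 ≤ 2 ^ r := Nat.lt_two_pow_self
  have hyr : (2:ℕ) ^ r ≤ 2 ^ (5*r+1) := Nat.pow_le_pow_right (by norm_num) (by omega)
  have h16 : (2:ℕ)^(5*r+5) = 16 * 2^(5*r+1) := by
    have e : 5*r+5 = 4 + (5*r+1) := by omega
    rw [e, pow_add]
    norm_num
  have hKp : (r+1).choose 3 + r ≤ 2^(3*r+1) := by
    have c1 : (r+1).choose 3 ≤ (r+1)^3 := choose_le_pow' (r+1) 3
    have c2 : (r+1)^3 ≤ (2^r)^3 := Nat.pow_le_pow_left hq1 3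
    have c3 : ((2:ℕ)^r)^3 = 2^(3*r) := by rw [← pow_mul]; congr 1; omega
    have c4 : r ≤ 2^(3*r) := by
      have := Nat.pow_le_pow_right (show 1 ≤ 2 by norm_num) (show r ≤ 3*r by omega)
      omega
    have c5 : (2:ℕ)^(3*r) + 2^(3*r) = 2^(3*r+1) := by
      rw [pow_succ]
      omega
    omega
  have hB : ((r+1).choose 3 + r)*((r-3)+1)*2^((r-3)+1) ≤ 2^(5*r+1) := by
    have e1 : (r-3)+1 ≤ 2^r := by omega
    have e2 : (2:ℕ)^((r-3)+1) ≤ 2^r := Nat.pow_le_pow_right (by norm_num) (by omega)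
    calc ((r+1).choose 3 + r)*((r-3)+1)*2^((r-3)+1)
        ≤ 2^(3*r+1) * 2^r * 2^r := Nat.mul_le_mul (Nat.mul_le_mul hKp e1) e2
      _ = 2^(5*r+1) := by rw [← pow_add, ← pow_add]; congr 1; omega
  have hB2 : 1*((r-3)+1)*2^((r-3)+1) ≤ 2^(5*r+1) := by
    have e1 : 1*((r-3)+1) ≤ 2^r := by omega
    have e2 : (2:ℕ)^((r-3)+1) ≤ 2^r := Nat.pow_le_pow_right (by norm_num) (by omega)
    calc 1*((r-3)+1)*2^((r-3)+1) ≤ 2^r * 2^r := Nat.mul_le_mul e1 e2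
      _ ≤ 2^(5*r+1) := by
          rw [← pow_add]
          exact Nat.pow_le_pow_right (by norm_num) (by omega)
  have hpos : 1 ≤ (2:ℕ)^(5*r+1) := Nat.one_le_two_pow
  omega

end BB


/-- For `r ≥ 3` and `n` sufficiently large: for every nonempty
`X ⊆ [2,n]` such that the star is an optimal MLCIF for `X`, writing
`m = max X`, the LCIFs which are LCIF-optimal for `X` are precisely the LCIFs
`𝒜` with `AHM_m ⊆ 𝒜 ⊆ 𝒮`. -/
theorem stmt19 :
    ∀ r : ℕ, 3 ≤ r → ∃ N : ℕ, ∀ n : ℕ, N ≤ n →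
      ∀ X : Finset ℕ, X ⊆ Finset.Icc 2 n → ∀ hX : X.Nonempty,
        OptimalMLCIF n r X (starFam n r) →
        ∀ 𝒜 : Finset (Finset ℕ),
          OptimalLCIF n r X 𝒜 ↔
            (IsLCIF n r 𝒜 ∧ AHM n r (X.max' hX) ⊆ 𝒜 ∧ 𝒜 ⊆ starFam n r) := by
  classical
  intro r hr
  refine ⟨2^(5*r+5), ?_⟩
  intro n hn X hXsub hXne hopt 𝒜
  obtain ⟨hbig1, hbig2, hbig3, hbig4, hbig5, hbig6⟩ := BB.sizes hr hn
  have hstarL : IsLCIF n r (starFam n r) := hopt.1.1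
  have hm2 : r + 2 ≤ X.max' hXne := BB.claimA hr (by omega) hXsub hXne hopt
  set m := X.max' hXne with hmdef
  have hmX : m ∈ X := X.max'_mem hXne
  have hmn : m ≤ n := (Finset.mem_Icc.mp (hXsub hmX)).2
  have hxle : ∀ x ∈ X, x ≤ m := fun x hx => X.le_max' x hx
  have hxge : ∀ x ∈ X, 2 ≤ x := fun x hx => (Finset.mem_Icc.mp (hXsub hx)).1
  constructor
  · rintro ⟨hL, hoptA⟩
    have hub := BB.hit_le_star hopt hL
    have hlb := hoptA _ hstarL
    have heq : hit X 𝒜 = hit X (starFam n r) := le_antisymm hub hlb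
    have hsub : 𝒜 ⊆ starFam n r := by
      by_contra hcon
      rw [Finset.not_subset] at hcon
      obtain ⟨A, hA, hA'⟩ := hcon
      have h1A : 1 ∉ A := by
        intro h1
        exact hA' (by rw [starFam, Finset.mem_filter]; exact ⟨hL.1 hA, h1⟩)
      have := BB.core hr hXsub hXne hm2 hbig1 hbig2 hbig3 hbig4 hbig5 hL ⟨A, hA, h1A⟩ hopt
      omega
    have hSHsub : (starFam n r).filter (fun A => (A ∩ X).Nonempty) ⊆ 𝒜 := by
      have h1 : 𝒜.filter (fun A => (A ∩ X).Nonempty) ⊆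
          (starFam n r).filter (fun A => (A ∩ X).Nonempty) :=
        Finset.filter_subset_filter _ hsub
      have h2 : ((starFam n r).filter (fun A => (A ∩ X).Nonempty)).card ≤
          (𝒜.filter (fun A => (A ∩ X).Nonempty)).card := le_of_eq heq.symm
      have h3 := Finset.eq_of_subset_of_card_le h1 h2
      rw [← h3]
      exact Finset.filter_subset _ _
    refine ⟨hL, ?_, hsub⟩
    intro A hA
    rw [BB.mem_AHM] at hA
    obtain ⟨hAc, hA2⟩ := hA
    rcases hA2 with ⟨h1A, x, hx⟩ | hsup
    · by_cases hhit : (A ∩ X).Nonempty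
      · apply hSHsub
        rw [Finset.mem_filter, starFam, Finset.mem_filter]
        exact ⟨⟨hAc, h1A⟩, hhit⟩
      · rw [Finset.mem_inter, Finset.mem_Icc] at hx
        obtain ⟨hxA, hx2, hxm⟩ := hx
        have hmA : m ∉ A := fun h => hhit ⟨m, Finset.mem_inter.mpr ⟨h, hmX⟩⟩
        have hxnm : x ≠ m := fun h => hmA (h ▸ hxA)
        set C := insert m (A.erase x) with hC
        have hmnotE : m ∉ A.erase x := fun h => hmA (Finset.mem_of_mem_erase h)
        have hCc : C ∈ chooseFam n r := by
          rw [BB.mem_chooseFam]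
          constructor
          · intro a ha
            rw [hC, Finset.mem_insert] at ha
            rcases ha with rfl | ha
            · rw [Finset.mem_Icc]; omega
            · exact (BB.mem_chooseFam.mp hAc).1 (Finset.mem_of_mem_erase ha)
          · rw [hC, Finset.card_insert_of_notMem hmnotE, Finset.card_erase_of_mem hxA,
               BB.card_of_mem hAc]
            omega
        have h1C : 1 ∈ C := by
          rw [hC, Finset.mem_insert]
          right
          rw [Finset.mem_erase]
          exact ⟨by omega, h1A⟩
        have hCin : C ∈ 𝒜 := by
          apply hSHsub
          rw [Finset.mem_filter, starFam, Finset.mem_filter]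
          refine ⟨⟨hCc, h1C⟩, ⟨m, Finset.mem_inter.mpr ⟨?_, hmX⟩⟩⟩
          rw [hC]
          exact Finset.mem_insert_self _ _
        have hdom : DomLE A C := by
          apply BBtool.domle_of_cnt
          · rw [BB.card_of_mem hAc, BB.card_of_mem hCc]
          · intro v
            unfold BBtool.cnt
            rw [hC, Finset.filter_insert]
            by_cases hmv : m ≤ v
            · rw [if_pos hmv]
              have hxv : x ≤ v := le_trans hxm hmv
              have hmnotf : m ∉ (A.erase x).filter (fun a => a ≤ v) :=
                fun h => hmnotE (Finset.mem_filter.mp h).1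
              have hxmem : x ∈ A.filter (fun a => a ≤ v) := Finset.mem_filter.mpr ⟨hxA, hxv⟩
              rw [Finset.card_insert_of_notMem hmnotf, Finset.filter_erase,
                  Finset.card_erase_of_mem hxmem]
              have hpos : 0 < (A.filter (fun a => a ≤ v)).card :=
                Finset.card_pos.mpr ⟨x, hxmem⟩
              omega
            · rw [if_neg hmv, Finset.filter_erase]
              exact Finset.card_erase_le
        exact hL.2.2 C hCin A hAc hdom
    · exfalso
      have hcard := Finset.card_le_card hsup
      rw [Nat.card_Icc, BB.card_of_mem hAc] at hcard
      omega
  · rintro ⟨hL, hAHM, hsub⟩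
    refine ⟨hL, ?_⟩
    intro ℬ hℬ
    have hge : hit X (starFam n r) ≤ hit X 𝒜 := by
      have hsub' : (starFam n r).filter (fun A => (A ∩ X).Nonempty) ⊆
          𝒜.filter (fun A => (A ∩ X).Nonempty) := by
        intro A hA
        rw [Finset.mem_filter, starFam, Finset.mem_filter] at hA
        obtain ⟨⟨hAc, h1A⟩, hhit⟩ := hA
        rw [Finset.mem_filter]
        refine ⟨hAHM ?_, hhit⟩
        rw [BB.mem_AHM]
        obtain ⟨x, hx⟩ := hhit
        rw [Finset.mem_inter] at hx
        refine ⟨hAc, Or.inl ⟨h1A, x, Finset.mem_inter.mpr ⟨hx.1, ?_⟩⟩⟩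
        rw [Finset.mem_Icc]
        exact ⟨hxge x hx.2, hxle x hx.2⟩
      exact Finset.card_le_card hsub'
    exact le_trans (BB.hit_le_star hopt hℬ) hge
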